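/- arXiv:2107.01468 — 12 statements merged into one kernel-verified Lean document; each statement's English description precedes it below -/
import Mathlib

section
/- For every natural number n, every word w : α → Σ over a countable linear order α has a finite subword that is n-equivalent to it: there exists a list s : List Σ such that s is a subword of w and s (viewed as a word on the finite linear order Fin s.length) has exactly the same subwords of length ≤ n as w. -/
/-- A finite word `s : List A` is a subword of a word `w : α → A` over a linear order `α`
if there is a strictly monotone map `g` from `Fin s.length` to `α` picking out `s`. -/
def IsSubword {A : Type*} {α : Type*} [LinearOrder α] (s : List A) (w : α → A) : Prop :=
  ∃ g : Fin s.length → α, StrictMono g ∧ ∀ i, w (g i) = s.get i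

/-- Two words (over possibly different linear orders) are `n`-equivalent if they have
exactly the same subwords of length at most `n`. -/
def NEquiv {A : Type*} (n : ℕ) {α : Type*} {β : Type*} [LinearOrder α] [LinearOrder β]
    (u : α → A) (v : β → A) : Prop :=
  ∀ s : List A, s.length ≤ n → (IsSubword s u ↔ IsSubword s v)

theorem isSubword_trans {A α : Type*} [LinearOrder α] {t s : List A} {w : α → A}
    (h1 : IsSubword t s.get) (h2 : IsSubword s w) : IsSubword t w := by
  obtain ⟨g, hg, hgt⟩ := h1
  obtain ⟨f, hf, hfs⟩ := h2
  exact ⟨f ∘ g, hf.comp hg, fun i => (hfs (g i)).trans (hgt i)⟩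

/-- Every countable word has a finite subword that is `n`-equivalent to it. -/
theorem exists_finite_subword_nequiv {A : Type*} [Finite A] [Nonempty A] (n : ℕ)
    {α : Type*} [LinearOrder α] [Countable α] (w : α → A) :
    ∃ s : List A, IsSubword s w ∧ NEquiv n s.get w := by
  classical
  set T : Set (List A) := {t | t.length ≤ n ∧ IsSubword t w} with hT
  have hTfin : T.Finite := (List.finite_length_le A n).subset (fun t ht => ht.1)
  let g : (t : List A) → t ∈ T → (Fin t.length → α) := fun t ht => ht.2.choose
  have hgmono : ∀ t ht, StrictMono (g t ht) := fun t ht => ht.2.choose_spec.1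
  have hgval : ∀ t ht i, w (g t ht i) = t.get i := fun t ht => ht.2.choose_spec.2
  let S : Set α := ⋃ t, ⋃ (ht : t ∈ T), Set.range (g t ht)
  have hSfin : S.Finite := by
    exact Set.Finite.biUnion' hTfin (fun t ht => Set.finite_range (g t ht))
  let F : Finset α := hSfin.toFinset
  let e : Fin F.card ≃o (F : Set α) := F.orderIsoOfFin rfl
  let s : List A := List.ofFn (fun i : Fin F.card => w (e i))
  have hlen : s.length = F.card := List.length_ofFn
  have hsget : ∀ i : Fin s.length, s.get i = w (e (Fin.cast hlen i)) := by
    intro i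
    simp only [s, List.get_ofFn]
  have hssub : IsSubword s w := by
    refine ⟨fun i => e (Fin.cast hlen i), ?_, ?_⟩
    · exact fun a b hab => e.strictMono (by exact hab)
    · intro i; rw [hsget]
  refine ⟨s, hssub, ?_⟩
  intro t htlen
  constructor
  · intro ht
    exact isSubword_trans ht hssub
  · intro ht
    have htT : t ∈ T := ⟨htlen, ht⟩
    have hrange : ∀ i, g t htT i ∈ F := by
      intro i
      have : g t htT i ∈ S := by
        simp only [S, Set.mem_iUnion]
        exact ⟨t, htT, i, rfl⟩
      simpa [F] using this
    refine ⟨fun i => Fin.cast hlen.symm (e.symm ⟨g t htT i, hrange i⟩), ?_, ?_⟩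
    · intro a b hab
      have : (⟨g t htT a, hrange a⟩ : (F : Set α)) < ⟨g t htT b, hrange b⟩ :=
        hgmono t htT hab
      exact e.symm.strictMono this
    · intro i
      rw [hsget]
      have : e (Fin.cast hlen (Fin.cast hlen.symm (e.symm ⟨g t htT i, hrange i⟩)))
          = (⟨g t htT i, hrange i⟩ : (F : Set α)) := by
        rw [Fin.cast_cast]
        exact e.apply_symm_apply _
      rw [this]
      exact hgval t htT i
end

section
/- Decomposition of subwords of a generalized concatenation: let α be a linear order and for each i : α let wᵢ : β i → Σ be a word. A nonempty list s : List Σ is a subword of the generalized concatenation ∏_{i∈α} wᵢ if and only if there exist k ≥ 1, nonempty lists s₁, …, s_k with s = s₁ ++ ⋯ ++ s_k (so in particular k ≤ s.length), and indices i₁ < i₂ < ⋯ < i_k in α such that s_j is a subword of w_{i_j} for each 1 ≤ j ≤ k. -/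
/-- Generalized concatenation of the family of words `w i : β i → A` over the index
linear order `α`: the word on the lexicographic sigma order sending `⟨i, x⟩` to `w i x`. -/
def genConcat {A : Type*} {α : Type*} {β : α → Type*} (w : ∀ i, β i → A) :
    Lex (Σ i, β i) → A :=
  fun x => w (ofLex x).1 (ofLex x).2

theorem isSubword_iff_exists_list {A α : Type*} [LinearOrder α] (s : List A) (w : α → A) :
    IsSubword s w ↔ ∃ l : List α, l.Pairwise (· < ·) ∧ l.map w = s := by
  constructor
  · rintro ⟨g, hg, hw⟩
    refine ⟨List.ofFn g, List.pairwise_ofFn.2 fun i j h => hg h, ?_⟩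
    rw [List.map_ofFn, show (w ∘ g) = s.get from funext hw, List.ofFn_get]
  · rintro ⟨l, hl, rfl⟩
    have h : (l.map w).length = l.length := l.length_map w
    refine ⟨fun i => l.get (Fin.cast h i), fun i j hij =>
      List.pairwise_iff_get.1 hl _ _ hij, fun i => ?_⟩
    simp [List.getElem_map]

section lexfacts
variable {α : Type*} [LinearOrder α] {β : α → Type*} [∀ i, LinearOrder (β i)]

theorem lex_lt_fst_le {a b : Lex (Σ i, β i)} (h : a < b) : (ofLex a).1 ≤ (ofLex b).1 := by
  rcases Sigma.Lex.lt_def.1 h with h | ⟨h, _⟩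
  · exact le_of_lt h
  · exact le_of_eq h

theorem cast_lt_of_lex_lt {i₀ : α} {x y : Σ i, β i} (hx : x.1 = i₀) (hy : y.1 = i₀)
    (h : (toLex x : Lex (Σ i, β i)) < toLex y) :
    cast (congrArg β hx) x.2 < cast (congrArg β hy) y.2 := by
  obtain ⟨i, a⟩ := x; obtain ⟨j, b⟩ := y
  dsimp at hx hy; subst hx; subst hy
  rcases Sigma.Lex.lt_def.1 h with h | ⟨h, h2⟩
  · exact absurd h (lt_irrefl _)
  · exact h2

theorem w_cast {A : Type*} (w : ∀ i, β i → A) {i₀ : α} (x : Σ i, β i) (hx : x.1 = i₀) :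
    w i₀ (cast (congrArg β hx) x.2) = w x.1 x.2 := by
  obtain ⟨i, b⟩ := x; dsimp at hx; subst hx; rfl
end lexfacts

theorem aux_forward {A α : Type*} [LinearOrder α] {β : α → Type*} [∀ i, LinearOrder (β i)]
    (w : ∀ i, β i → A) :
    ∀ n (l : List (Lex (Σ i, β i))), l.length ≤ n → l ≠ [] → l.Pairwise (· < ·) →
      ∃ L : List (α × List A), L ≠ [] ∧ (L.map Prod.snd).flatten = l.map (genConcat w) ∧
        (L.map Prod.fst).Pairwise (· < ·) ∧ (∀ p ∈ L, p.2 ≠ [] ∧ IsSubword p.2 (w p.1)) ∧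
        (∀ p ∈ L, ∃ x ∈ l, (ofLex x).1 = p.1) := by
  intro n
  induction n with
  | zero =>
    intro l hl hne _
    cases l with
    | nil => exact absurd rfl hne
    | cons a t => simp at hl
  | succ n ih =>
    intro l hlen hne hpw
    obtain ⟨x, xs, rfl⟩ := List.exists_cons_of_ne_nil hne
    obtain ⟨i₀, hi₀⟩ : ∃ i₀, (ofLex x).1 = i₀ := ⟨_, rfl⟩
    obtain ⟨p, hp⟩ : ∃ p : Lex (Σ i, β i) → Bool,
      p = fun y => decide ((ofLex y).1 = i₀) := ⟨_, rfl⟩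
    obtain ⟨l₁, hl₁⟩ : ∃ l₁, l₁ = List.takeWhile p (x :: xs) := ⟨_, rfl⟩
    obtain ⟨l₂, hl₂⟩ : ∃ l₂, l₂ = List.dropWhile p (x :: xs) := ⟨_, rfl⟩
    have hsplit : l₁ ++ l₂ = x :: xs := by
      rw [hl₁, hl₂]; exact List.takeWhile_append_dropWhile
    have hpx : p x = true := by rw [hp]; simp [hi₀]
    have hl₁cons : l₁ = x :: List.takeWhile p xs := by
      rw [hl₁, List.takeWhile_cons, if_pos hpx]
    have hl₁ne : l₁ ≠ [] := by rw [hl₁cons]; simp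
    have hmem₁ : ∀ y ∈ l₁, (ofLex y).1 = i₀ := by
      intro y hy
      rw [hl₁] at hy
      have h' : p y = true := List.mem_takeWhile_imp hy
      rw [hp] at h'
      exact of_decide_eq_true h'
    have hpw₁ : l₁.Pairwise (· < ·) := by
      rw [hl₁]; exact hpw.sublist (List.takeWhile_sublist p)
    have hpw₂ : l₂.Pairwise (· < ·) := by
      rw [hl₂]; exact hpw.sublist (List.dropWhile_sublist p)
    have hcross : ∀ a ∈ l₁, ∀ b ∈ l₂, a < b := by
      rw [← hsplit] at hpw
      exact (List.pairwise_append.1 hpw).2.2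
    have hsub₁ : IsSubword (l₁.map (genConcat w)) (w i₀) := by
      rw [isSubword_iff_exists_list]
      refine ⟨l₁.pmap (fun y hy => cast (congrArg β hy) (ofLex y).2) hmem₁, ?_, ?_⟩
      · rw [List.pairwise_pmap]
        exact hpw₁.imp fun {a b} hab h₁ h₂ => cast_lt_of_lex_lt h₁ h₂ hab
      · rw [List.map_pmap]
        have heq : l₁.pmap (fun y hy => w i₀ (cast (congrArg β hy) (ofLex y).2)) hmem₁
            = l₁.pmap (fun y _ => genConcat w y) hmem₁ :=
          List.pmap_congr_left l₁ (fun y _ hy _ => w_cast w _ hy)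
        rw [heq, List.pmap_eq_map]
    have hl₂all : ∀ y ∈ l₂, i₀ < (ofLex y).1 := by
      cases h2 : l₂ with
      | nil => simp
      | cons h₂ t₂ =>
        have heq : List.dropWhile p (x :: xs) = h₂ :: t₂ := by rw [← hl₂, h2]
        have h0 : 0 < (List.dropWhile p (x :: xs)).length := by rw [heq]; simp
        have hnp := List.dropWhile_get_zero_not (p := p) (x :: xs) h0
        rw [List.get_of_eq heq] at hnp
        simp only [hp, List.get_eq_getElem, Fin.coe_cast, List.getElem_cons_zero,
          decide_eq_true_eq] at hnp
        have hx₁ : x ∈ l₁ := by rw [hl₁cons]; simp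
        have hle : i₀ ≤ (ofLex h₂).1 := by
          have := lex_lt_fst_le (hcross x hx₁ h₂ (by rw [h2]; exact List.mem_cons_self))
          rwa [hi₀] at this
        have hlt : i₀ < (ofLex h₂).1 := lt_of_le_of_ne hle (Ne.symm hnp)
        intro y hy
        rw [h2] at hpw₂
        rcases List.mem_cons.1 hy with rfl | hy
        · exact hlt
        · exact hlt.trans_le (lex_lt_fst_le ((List.pairwise_cons.1 hpw₂).1 y hy))
    have hmapsplit : l₁.map (genConcat w) ++ l₂.map (genConcat w)
        = (x :: xs).map (genConcat w) := by rw [← List.map_append, hsplit]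
    cases h2 : l₂ with
    | nil =>
      refine ⟨[(i₀, l₁.map (genConcat w))], by simp, ?_, by simp, ?_, ?_⟩
      · rw [← hmapsplit, h2]; simp
      · intro q hq
        simp only [List.mem_singleton] at hq
        subst hq
        exact ⟨by simpa using hl₁ne, hsub₁⟩
      · intro q hq
        simp only [List.mem_singleton] at hq
        subst hq
        exact ⟨x, by simp, hi₀⟩
    | cons h₂ t₂ =>
      have hlen₂ : l₂.length ≤ n := by
        have h1 : l₁.length + l₂.length = xs.length + 1 := by
          rw [← List.length_append, hsplit]; simp
        have : 1 ≤ l₁.length := List.length_pos_iff.2 hl₁ne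
        simp only [List.length_cons] at hlen
        omega
      obtain ⟨L₂, hL₂ne, hL₂flat, hL₂pw, hL₂sub, hL₂mem⟩ :=
        ih l₂ hlen₂ (by rw [h2]; simp) hpw₂
      refine ⟨(i₀, l₁.map (genConcat w)) :: L₂, by simp, ?_, ?_, ?_, ?_⟩
      · simp only [List.map_cons, List.flatten_cons]
        rw [hL₂flat, hmapsplit]; simp
      · rw [List.map_cons, List.pairwise_cons]
        refine ⟨?_, hL₂pw⟩
        intro a ha
        simp only [List.mem_map] at ha
        obtain ⟨q, hq, rfl⟩ := ha
        obtain ⟨y, hy, hyq⟩ := hL₂mem q hq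
        rw [← hyq]
        exact hl₂all y hy
      · intro q hq
        rcases List.mem_cons.1 hq with rfl | hq
        · exact ⟨by simpa using hl₁ne, hsub₁⟩
        · exact hL₂sub q hq
      · intro q hq
        rcases List.mem_cons.1 hq with rfl | hq
        · exact ⟨x, by simp, hi₀⟩
        · obtain ⟨y, hy, hyq⟩ := hL₂mem q hq
          refine ⟨y, ?_, hyq⟩
          rw [← hsplit]
          exact List.mem_append_right _ hy

/-- A nonempty list is a subword of a generalized concatenation iff it decomposes as a
concatenation of `k ≥ 1` nonempty lists which are subwords of the factors at `k`
strictly increasing indices. -/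
theorem isSubword_genConcat_iff {A : Type*} [Finite A] [Nonempty A]
    {α : Type*} [LinearOrder α] {β : α → Type*} [∀ i, LinearOrder (β i)]
    (w : ∀ i, β i → A) (s : List A) (hs : s ≠ []) :
    IsSubword s (genConcat w) ↔
      ∃ k : ℕ, 1 ≤ k ∧ ∃ (t : Fin k → List A) (idx : Fin k → α),
        (∀ j, t j ≠ []) ∧ s = (List.ofFn t).flatten ∧ StrictMono idx ∧
          ∀ j, IsSubword (t j) (w (idx j)) := by
  constructor
  · intro h
    obtain ⟨l, hl, hmap⟩ := (isSubword_iff_exists_list s (genConcat w)).1 h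
    have hlne : l ≠ [] := by rintro rfl; exact hs hmap.symm
    obtain ⟨L, hLne, hLflat, hLpw, hLsub, -⟩ := aux_forward w l.length l le_rfl hlne hl
    refine ⟨L.length, List.length_pos_iff.2 hLne, fun j => (L.get j).2, fun j => (L.get j).1,
      fun j => (hLsub _ (L.get_mem _)).1, ?_, ?_, fun j => (hLsub _ (L.get_mem _)).2⟩
    · have he : List.ofFn (fun j => (L.get j).2) = L.map Prod.snd := by
        rw [show (fun j => (L.get j).2) = Prod.snd ∘ L.get from rfl, ← List.map_ofFn,
          List.ofFn_get]
      rw [he, hLflat, hmap]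
    · intro i j hij
      exact List.pairwise_iff_get.1 (List.pairwise_map.1 hLpw) i j hij
  · rintro ⟨k, hk, t, idx, htne, hflat, hmono, hsub⟩
    rw [isSubword_iff_exists_list]
    choose lj hpwj hmapj using fun j => (isSubword_iff_exists_list (t j) (w (idx j))).1 (hsub j)
    refine ⟨(List.ofFn (fun j => (lj j).map
      (fun b => (toLex (⟨idx j, b⟩ : Σ i, β i) : Lex (Σ i, β i))))).flatten, ?_, ?_⟩
    · rw [List.pairwise_flatten]
      constructor
      · intro l' hl'
        rw [List.mem_ofFn] at hl'
        obtain ⟨j, rfl⟩ := hl'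
        rw [List.pairwise_map]
        refine (hpwj j).imp fun {a b} hab => ?_
        exact Sigma.Lex.lt_def.2 (Or.inr ⟨rfl, hab⟩)
      · rw [List.pairwise_ofFn]
        intro i j hij x hx y hy
        simp only [List.mem_map] at hx hy
        obtain ⟨a, -, rfl⟩ := hx
        obtain ⟨b, -, rfl⟩ := hy
        exact Sigma.Lex.lt_def.2 (Or.inl (hmono hij))
    · rw [List.map_flatten, List.map_ofFn, hflat]
      refine congrArg List.flatten (congrArg List.ofFn (funext fun j => ?_))
      show ((lj j).map _).map (genConcat w) = t j
      rw [List.map_map, ← hmapj j]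
      rfl
end

section
/- J-triviality of the n-equivalence quotient: let x and y be words over Σ (over arbitrary linear orders). If there exist words u, v such that the concatenation u·x·v is n-equivalent to y, and there exist words u', v' such that the concatenation u'·y·v' is n-equivalent to x, then x is n-equivalent to y. -/
/-- Concatenation `u·x·v` of three words, as a word on the lexicographic sum of the
three domains. -/
def concat3 {A : Type*} {γ₁ γ₂ γ₃ : Type*} (u : γ₁ → A) (x : γ₂ → A) (v : γ₃ → A) :
    Lex (γ₁ ⊕ Lex (γ₂ ⊕ γ₃)) → A := fun z =>
  match ofLex z with
  | Sum.inl a => u a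
  | Sum.inr b =>
    match ofLex b with
    | Sum.inl c => x c
    | Sum.inr d => v d


lemma isSubword_concat3_of_mid {A : Type*} {γ₁ γ₂ γ₃ : Type*}
    [LinearOrder γ₁] [LinearOrder γ₂] [LinearOrder γ₃]
    (u : γ₁ → A) (x : γ₂ → A) (v : γ₃ → A) (s : List A)
    (h : IsSubword s x) : IsSubword s (concat3 u x v) := by
  obtain ⟨g, hg, hw⟩ := h
  refine ⟨fun i => toLex (Sum.inr (toLex (Sum.inl (g i)))), ?_, fun i => hw i⟩
  intro a b hab
  exact Sum.Lex.inr_lt_inr_iff.mpr (Sum.Lex.inl_lt_inl_iff.mpr (hg hab))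

/-- J-triviality of the `n`-equivalence quotient: if `u·x·v ∼ₙ y` and `u'·y·v' ∼ₙ x`
for some words `u, v, u', v'`, then `x ∼ₙ y`. -/
theorem nequiv_of_jequiv {A : Type*} [Finite A] [Nonempty A] (n : ℕ)
    {αx αy : Type*} [LinearOrder αx] [LinearOrder αy]
    (x : αx → A) (y : αy → A)
    (h1 : ∃ (γ₁ γ₃ : Type) (_ : LinearOrder γ₁) (_ : LinearOrder γ₃)
      (u : γ₁ → A) (v : γ₃ → A), NEquiv n (concat3 u x v) y)
    (h2 : ∃ (γ₁ γ₃ : Type) (_ : LinearOrder γ₁) (_ : LinearOrder γ₃)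
      (u' : γ₁ → A) (v' : γ₃ → A), NEquiv n (concat3 u' y v') x) :
    NEquiv n x y := by
  obtain ⟨γ₁, γ₃, _, _, u, v, h1⟩ := h1
  obtain ⟨δ₁, δ₃, _, _, u', v', h2⟩ := h2
  intro s hs
  constructor
  · intro hx
    exact (h1 s hs).mp (isSubword_concat3_of_mid u x v s hx)
  · intro hy
    exact (h2 s hs).mp (isSubword_concat3_of_mid u' y v' s hy)
end

section
/- Perfect shuffles are n-equivalent to the n-th power of the concatenation: let u₁, …, u_p be nonempty words over Σ and let f : ℚ → Fin p be a perfect shuffle labeling, i.e. for all rationals x < y and every j : Fin p there exists z with x < z < y and f z = j. Then the generalized concatenation ∏_{q∈ℚ} u_{f q} is n-equivalent to the concatenation of n copies of u₁·u₂⋯u_p. -/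
theorem aux_u_cast {A : Type*} {p : ℕ} {β : Fin p → Type*} (u : ∀ j, β j → A)
    {j j' : Fin p} (e : j' = j) (x : β j) :
    u j' (cast (congrArg β e.symm) x) = u j x := by subst e; rfl

theorem aux_cast_lt {p : ℕ} {β : Fin p → Type*} [∀ j, LinearOrder (β j)]
    {j j' : Fin p} (e : j' = j) {x y : β j} (h : x < y) :
    cast (congrArg β e.symm) x < cast (congrArg β e.symm) y := by
  subst e; simpa using h

theorem aux_fwd {n p : ℕ} {β : Fin p → Type*} [∀ j, LinearOrder (β j)] (f : ℚ → Fin p)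
    {a b : ℚ} {ka kb : Fin n} {x : β (f a)} {y : β (f b)}
    (hab : a = b → ka = kb) (hlt : a < b → ka < kb)
    (h : (toLex ⟨a, x⟩ : Lex (Σ q : ℚ, β (f q))) < toLex ⟨b, y⟩) :
    (toLex ⟨ka, toLex ⟨f a, x⟩⟩ : Lex (Σ _ : Fin n, Lex (Σ j, β j))) <
      toLex ⟨kb, toLex ⟨f b, y⟩⟩ := by
  have h' : Sigma.Lex (· < ·) (fun _ => (· < ·)) (⟨a, x⟩ : Σ q : ℚ, β (f q)) ⟨b, y⟩ := h
  show Sigma.Lex (· < ·) (fun _ => (· < ·))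
    (⟨ka, toLex ⟨f a, x⟩⟩ : Σ _ : Fin n, Lex (Σ j, β j)) ⟨kb, toLex ⟨f b, y⟩⟩
  cases h' with
  | left _ _ hab' => exact Sigma.Lex.left _ _ (hlt hab')
  | right _ _ hxy =>
    have ek : ka = kb := hab rfl
    subst ek
    exact Sigma.Lex.right _ _ (Sigma.Lex.right _ _ hxy)

theorem aux_bwd {n p : ℕ} {β : Fin p → Type*} [∀ j, LinearOrder (β j)] (f : ℚ → Fin p)
    (Q : Fin n → Fin p → ℚ) (hQ3 : ∀ k j, f (Q k j) = j)
    (hQmono : ∀ k k' : Fin n, ∀ j j' : Fin p,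
      (k < k' ∨ (k = k' ∧ j < j')) → Q k j < Q k' j')
    {ka kb : Fin n} {ja jb : Fin p} {x : β ja} {y : β jb}
    (h : (toLex ⟨ka, toLex ⟨ja, x⟩⟩ : Lex (Σ _ : Fin n, Lex (Σ j, β j))) <
      toLex ⟨kb, toLex ⟨jb, y⟩⟩) :
    (toLex ⟨Q ka ja, cast (congrArg β (hQ3 ka ja).symm) x⟩ : Lex (Σ q : ℚ, β (f q))) <
      toLex ⟨Q kb jb, cast (congrArg β (hQ3 kb jb).symm) y⟩ := by
  have h' : Sigma.Lex (· < ·) (fun _ => (· < ·))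
      (⟨ka, toLex ⟨ja, x⟩⟩ : Σ _ : Fin n, Lex (Σ j, β j)) ⟨kb, toLex ⟨jb, y⟩⟩ := h
  show Sigma.Lex (· < ·) (fun _ => (· < ·))
    (⟨Q ka ja, cast (congrArg β (hQ3 ka ja).symm) x⟩ : Σ q : ℚ, β (f q))
    ⟨Q kb jb, cast (congrArg β (hQ3 kb jb).symm) y⟩
  cases h' with
  | left _ _ hk => exact Sigma.Lex.left _ _ (hQmono _ _ _ _ (Or.inl hk))
  | right _ _ hw =>
    have h2 : Sigma.Lex (· < ·) (fun _ => (· < ·)) (⟨ja, x⟩ : Σ j, β j) ⟨jb, y⟩ := hw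
    cases h2 with
    | left _ _ hj => exact Sigma.Lex.left _ _ (hQmono _ _ _ _ (Or.inr ⟨rfl, hj⟩))
    | right _ _ hx => exact Sigma.Lex.right _ _ (aux_cast_lt (hQ3 ka ja) hx)

/-- The perfect shuffle of nonempty words `u 0, …, u (p-1)` (along a dense labeling
`f : ℚ → Fin p`) is `n`-equivalent to the `n`-th power of the concatenation
`u 0 · u 1 ⋯ u (p-1)`. -/
theorem shuffle_nequiv_pow {A : Type*} [Finite A] [Nonempty A] (n : ℕ)
    {p : ℕ} {β : Fin p → Type*} [∀ j, LinearOrder (β j)] [∀ j, Nonempty (β j)]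
    (u : ∀ j, β j → A) (f : ℚ → Fin p)
    (hf : ∀ x y : ℚ, x < y → ∀ j : Fin p, ∃ z : ℚ, x < z ∧ z < y ∧ f z = j) :
    NEquiv n (genConcat (fun q : ℚ => u (f q)))
      (genConcat (fun _ : Fin n => genConcat u)) := by
  -- choose increasing rationals with prescribed labels
  have H : ∀ (k : Fin n) (j : Fin p), ∃ z : ℚ,
      (((k : ℕ) : ℚ) * p + (j : ℕ) < z) ∧ (z < ((k : ℕ) : ℚ) * p + (j : ℕ) + 1) ∧ f z = j :=
    fun k j => hf _ _ (by linarith) j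
  choose Q hQ1 hQ2 hQ3 using H
  have hQmono : ∀ k k' : Fin n, ∀ j j' : Fin p,
      (k < k' ∨ (k = k' ∧ j < j')) → Q k j < Q k' j' := by
    rintro k k' j j' (h | ⟨rfl, h⟩)
    · have hk : ((k : ℕ) : ℚ) + 1 ≤ ((k' : ℕ) : ℚ) := by exact_mod_cast h
      have hj : ((j : ℕ) : ℚ) + 1 ≤ (p : ℚ) := by exact_mod_cast j.isLt
      have hj' : (0 : ℚ) ≤ ((j' : ℕ) : ℚ) := by positivity
      have hp : (0 : ℚ) ≤ (p : ℚ) := by positivity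
      have h1 := hQ2 k j
      have h2 := hQ1 k' j'
      nlinarith [mul_le_mul_of_nonneg_right hk hp]
    · have hj : ((j : ℕ) : ℚ) + 1 ≤ ((j' : ℕ) : ℚ) := by exact_mod_cast h
      have h1 := hQ2 k j
      have h2 := hQ1 k j'
      linarith
  intro s hs
  constructor
  · -- shuffle → power
    rintro ⟨g, hg, hgs⟩
    -- first coordinates
    set q : Fin s.length → ℚ := fun i => (g i).1 with hq
    have hqmono : Monotone q := by
      intro i i' hii
      rcases eq_or_lt_of_le hii with rfl | hlt
      · exact le_rfl
      · have h := hg hlt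
        rw [Sigma.Lex.lt_def] at h
        obtain h | ⟨e, _⟩ := h
        · exact le_of_lt h
        · exact le_of_eq e
    set t : Fin s.length → ℕ :=
      fun i => ((Finset.univ.image q).filter (fun v => v < q i)).card with htdef
    have ht : ∀ i, t i < n := by
      intro i
      have hsub : (Finset.univ.image q).filter (fun v => v < q i) ⊆
          (Finset.Iio i).image q := by
        intro v hv
        simp only [Finset.mem_filter, Finset.mem_image, Finset.mem_univ, true_and,
          Finset.mem_Iio] at hv ⊢
        obtain ⟨⟨i', rfl⟩, hlt⟩ := hv
        refine ⟨i', ?_, rfl⟩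
        by_contra hc
        push_neg at hc
        exact absurd (hqmono hc) (not_le.mpr hlt)
      calc t i ≤ ((Finset.Iio i).image q).card := Finset.card_le_card hsub
        _ ≤ (Finset.Iio i).card := Finset.card_image_le
        _ = (i : ℕ) := by simp
        _ < s.length := i.isLt
        _ ≤ n := hs
    have htmono : ∀ {i i' : Fin s.length}, q i < q i' → t i < t i' := by
      intro i i' h
      apply Finset.card_lt_card
      rw [Finset.ssubset_iff_of_subset]
      · refine ⟨q i, ?_, ?_⟩
        · simp only [Finset.mem_filter, Finset.mem_image, Finset.mem_univ, true_and]
          exact ⟨⟨i, rfl⟩, h⟩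
        · simp only [Finset.mem_filter, Finset.mem_image, Finset.mem_univ, true_and]
          rintro ⟨-, hlt⟩
          exact lt_irrefl _ hlt
      · intro v hv
        simp only [Finset.mem_filter] at hv ⊢
        exact ⟨hv.1, hv.2.trans h⟩
    have hteq : ∀ {i i' : Fin s.length}, q i = q i' → t i = t i' := by
      intro i i' h
      simp only [htdef, h]
    refine ⟨fun i => toLex ⟨⟨t i, ht i⟩, toLex ⟨f (q i), (g i).2⟩⟩, ?_, ?_⟩
    · intro i i' hii
      exact aux_fwd f (fun e => Fin.ext (hteq e))
        (fun hl => Fin.mk_lt_mk.mpr (htmono hl)) (hg hii)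
    · intro i
      exact hgs i
  · -- power → shuffle
    rintro ⟨g, hg, hgs⟩
    refine ⟨fun i => toLex ⟨Q (g i).1 ((g i).2).1,
        cast (congrArg β (hQ3 (g i).1 ((g i).2).1).symm) ((g i).2).2⟩, ?_, ?_⟩
    · intro i i' hii
      exact aux_bwd f Q hQ3 hQmono (hg hii)
    · intro i
      exact (aux_u_cast u (hQ3 (g i).1 ((g i).2).1) ((g i).2).2).trans (hgs i)
end

section
/- Prefix approximation of ω-concatenations: for any sequence of words wᵢ : β i → Σ indexed by i : ℕ, there exists k : ℕ such that the generalized concatenation ∏_{i∈ℕ} wᵢ is n-equivalent to the finite concatenation ∏_{i < k} wᵢ (the generalized concatenation over Fin k). -/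
/-- A subword of `v ∘ f` for strictly monotone `f` is a subword of `v`. -/
lemma IsSubword.comp {A α γ : Type*} [LinearOrder α] [LinearOrder γ] {f : α → γ}
    (hf : StrictMono f) {v : γ → A} {s : List A} (h : IsSubword s (fun x => v (f x))) :
    IsSubword s v := by
  obtain ⟨g, hg, hval⟩ := h
  exact ⟨f ∘ g, hf.comp hg, hval⟩

/-- The embedding of a prefix sigma-type into the full one, strictly monotone. -/
lemma embed_strictMono {β : ℕ → Type*} [∀ i, LinearOrder (β i)] (k : ℕ) :
    StrictMono (fun x : Lex (Σ i : Fin k, β i.val) =>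
      (toLex ⟨((ofLex x).1 : Fin k).val, (ofLex x).2⟩ : Lex (Σ i : ℕ, β i))) := by
  intro a b hab
  rw [Sigma.Lex.lt_def] at hab ⊢
  obtain h | ⟨h, h2⟩ := hab
  · exact Or.inl (by exact_mod_cast h)
  · refine Or.inr ?_
    rcases a with ⟨i, x⟩
    rcases b with ⟨j, y⟩
    cases h
    exact ⟨rfl, h2⟩

/-- Prefix approximation of ω-concatenations: an ω-indexed generalized concatenation
is `n`-equivalent to one of its finite prefixes. -/
theorem omega_concat_nequiv_prefix {A : Type*} [Finite A] [Nonempty A] (n : ℕ)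
    {β : ℕ → Type*} [∀ i, LinearOrder (β i)] (w : ∀ i, β i → A) :
    ∃ k : ℕ, NEquiv n (genConcat w) (genConcat (fun i : Fin k => w i.val)) := by
  classical
  -- For each subword `s` of the full word, a stage where it appears.
  have key : ∀ s : List A, IsSubword s (genConcat w) →
      ∃ k, ∀ k', k ≤ k' → IsSubword s (genConcat (fun i : Fin k' => w i.val)) := by
    intro s ⟨g, hg, hval⟩
    refine ⟨(Finset.univ.sup fun i => (ofLex (g i)).1) + 1, fun k' hk' => ?_⟩
    have hb : ∀ i, (ofLex (g i)).1 < k' := fun i =>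
      lt_of_lt_of_le (Nat.lt_succ_of_le (Finset.le_sup (f := fun i => (ofLex (g i)).1) (Finset.mem_univ i))) hk'
    refine ⟨fun i => toLex ⟨⟨(ofLex (g i)).1, hb i⟩, (ofLex (g i)).2⟩, ?_, fun i => hval i⟩
    intro i j hij
    have := hg hij
    have hemb := embed_strictMono (β := β) k'
    rw [← hemb.lt_iff_lt]
    exact this
  -- The set of relevant subwords is finite.
  have hfin : {s : List A | s.length ≤ n ∧ IsSubword s (genConcat w)}.Finite :=
    (List.finite_length_le A n).subset fun s hs => hs.1
  -- Choose a uniform stage.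
  choose K hK using fun s (h : IsSubword s (genConcat w)) => key s h
  set k : ℕ := hfin.toFinset.sup (fun s => if h : IsSubword s (genConcat w) then K s h else 0)
    with hk
  refine ⟨k, fun s hs => ⟨fun h => ?_, fun h => ?_⟩⟩
  · have hmem : s ∈ hfin.toFinset := hfin.mem_toFinset.2 ⟨hs, h⟩
    have : (if h' : IsSubword s (genConcat w) then K s h' else 0) ≤ k :=
      Finset.le_sup (f := fun s => if h' : IsSubword s (genConcat w) then K s h' else 0) hmem
    rw [dif_pos h] at this
    exact hK s h k this
  · exact IsSubword.comp (embed_strictMono k) (v := genConcat w)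
      (show IsSubword s (fun x : Lex (Σ i : Fin k, β i.val) =>
        genConcat w (toLex ⟨((ofLex x).1 : Fin k).val, (ofLex x).2⟩)) from h)
end

section
/- The ω-power of a word is n-equivalent to its n-th power: for any word w : β → Σ over a linear order β, the generalized concatenation of ω many copies of w (indexed by ℕ) is n-equivalent to the concatenation of n copies of w (indexed by Fin n). -/
/-- Lex `<` on a sigma type with constant fibers, without `Eq.rec`. -/
lemma constLex_lt_iff {ι β : Type*} [Preorder ι] [Preorder β] (a b : Lex (Σ _ : ι, β)) :
    a < b ↔ (ofLex a).1 < (ofLex b).1 ∨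
      ((ofLex a).1 = (ofLex b).1 ∧ (ofLex a).2 < (ofLex b).2) := by
  obtain ⟨i, x⟩ := a; obtain ⟨j, y⟩ := b
  show toLex (⟨i, x⟩ : Σ _ : ι, β) < toLex ⟨j, y⟩ ↔ _
  rw [Sigma.Lex.lt_def]
  constructor
  · rintro (h | ⟨h, h2⟩)
    · exact Or.inl h
    · change i = j at h; subst h; exact Or.inr ⟨rfl, h2⟩
  · rintro (h | ⟨h, h2⟩)
    · exact Or.inl h
    · subst h; exact Or.inr ⟨rfl, h2⟩

/-- The ω-power of a word is `n`-equivalent to its `n`-th power. -/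
theorem omega_pow_nequiv_pow {A : Type*} [Finite A] [Nonempty A] (n : ℕ)
    {β : Type*} [LinearOrder β] (w : β → A) :
    NEquiv n (genConcat (fun _ : ℕ => w)) (genConcat (fun _ : Fin n => w)) := by
  intro s hs
  constructor
  · rintro ⟨g, hmono, hval⟩
    -- compress first components into Fin n
    set f : Fin s.length → ℕ := fun i => (ofLex (g i)).1 with hf
    have hfmem : ∀ i, f i ∈ Finset.image f Finset.univ := fun i =>
      Finset.mem_image_of_mem f (Finset.mem_univ i)
    set S : Finset ℕ := Finset.image f Finset.univ with hS
    have hcard : S.card ≤ n := by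
      refine le_trans (le_trans Finset.card_image_le ?_) hs
      simp
    let e := S.orderIsoOfFin rfl
    let r : Fin s.length → Fin n := fun i => Fin.castLE hcard (e.symm ⟨f i, hfmem i⟩)
    refine ⟨fun i => toLex ⟨r i, (ofLex (g i)).2⟩, ?_, ?_⟩
    · intro i j hij
      have hlex := hmono hij
      rw [constLex_lt_iff] at hlex ⊢
      rcases hlex with h | ⟨h, h2⟩
      · left
        show (Fin.castLE hcard (e.symm ⟨f i, hfmem i⟩) : Fin n) < _
        simp only [Fin.lt_iff_val_lt_val, Fin.coe_castLE]
        exact_mod_cast (e.symm.lt_iff_lt).mpr (by exact_mod_cast h)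
      · refine Or.inr ⟨?_, h2⟩
        show (Fin.castLE hcard (e.symm ⟨f i, hfmem i⟩) : Fin n) = _
        congr 1
        exact congrArg e.symm (Subtype.ext h)
    · intro i
      simpa [genConcat] using hval i
  · rintro ⟨g, hmono, hval⟩
    refine ⟨fun i => toLex ⟨((ofLex (g i)).1 : ℕ), (ofLex (g i)).2⟩, ?_, ?_⟩
    · intro i j hij
      have hlex := hmono hij
      rw [constLex_lt_iff] at hlex ⊢
      rcases hlex with h | ⟨h, h2⟩
      · left; exact_mod_cast h
      · exact Or.inr ⟨by exact_mod_cast congrArg Fin.val h, h2⟩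
    · intro i
      simpa [genConcat] using hval i
end

section
/- Idempotents in a block product of monoids: let M and N be monoids and let (m, f) be an idempotent element of the block product M □ N. Then m is an idempotent of M, and the function (p, q) ↦ f (p * m, m * q) is an idempotent of the pointwise-product monoid N^{M × M}, i.e. f (p * m, m * q) * f (p * m, m * q) = f (p * m, m * q) for all p, q ∈ M. -/
/-- The carrier of the block product `M □ N`: pairs of an element of `M` and a
function `M × M → N`. -/
structure BlockProd (M : Type*) (N : Type*) where
  fst : M
  snd : M × M → N

namespace BlockProd

variable {M N : Type*} [Monoid M] [Monoid N]

/-- The block product multiplication: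
`(m, f) * (m', f') = (m * m', fun (p, q) => f (p, m' * q) * f' (p * m, q))`. -/
def bmul (a b : BlockProd M N) : BlockProd M N :=
  ⟨a.fst * b.fst, fun pq => a.snd (pq.1, b.fst * pq.2) * b.snd (pq.1 * a.fst, pq.2)⟩

/-- The block product monoid structure, with identity `(1, fun _ => 1)`. -/
instance : Monoid (BlockProd M N) where
  mul := bmul
  one := ⟨1, fun _ => 1⟩
  mul_assoc a b c := by
    show bmul (bmul a b) c = bmul a (bmul b c)
    simp only [bmul]
    congr 1
    · exact mul_assoc _ _ _
    · funext pq
      simp [mul_assoc]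
  one_mul a := by
    show bmul ⟨1, fun _ => 1⟩ a = a
    obtain ⟨a1, a2⟩ := a
    simp only [bmul]
    congr 1
    · exact one_mul _
    · funext pq
      simp
  mul_one a := by
    show bmul a ⟨1, fun _ => 1⟩ = a
    obtain ⟨a1, a2⟩ := a
    simp only [bmul]
    congr 1
    · exact mul_one _
    · funext pq
      simp

end BlockProd

/-- If `(m, f)` is an idempotent of the block product `M □ N`, then `m` is an idempotent
of `M` and `(p, q) ↦ f (p * m, m * q)` is an idempotent of the pointwise monoid
`N^(M × M)`. -/
theorem blockProd_idempotent {M N : Type*} [Monoid M] [Monoid N]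
    (m : M) (f : M × M → N)
    (h : BlockProd.mk m f * BlockProd.mk m f = BlockProd.mk m f) :
    m * m = m ∧
      ∀ p q : M, f (p * m, m * q) * f (p * m, m * q) = f (p * m, m * q) := by
  have h' : BlockProd.bmul (BlockProd.mk m f) (BlockProd.mk m f) = BlockProd.mk m f := h
  simp only [BlockProd.bmul, BlockProd.mk.injEq] at h'
  obtain ⟨hm, hf⟩ := h'
  refine ⟨hm, fun p q => ?_⟩
  have := congrFun hf (p * m, m * q)
  rw [show m * (m * q) = m * q by rw [← mul_assoc, hm],
      show p * m * m = p * m by rw [mul_assoc, hm]] at this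
  exact this
end

section
/- Idempotent powers in a block product over an aperiodic monoid: let M be an aperiodic monoid (for every x ∈ M there exists n with x^n = x^{n+1}), let N be a monoid, let (m', f') ∈ M □ N and let k ≥ 1 be such that (m, f) := (m', f')^k is idempotent in M □ N. Then m = (m')^k is an idempotent of M, and for all p, q ∈ M one has f (p * m, m * q) = (f' (p * m, m * q))^k, and this element is an idempotent of N. -/

theorem BlockProd.pow_fst {M N : Type*} [Monoid M] [Monoid N] (a : BlockProd M N) (k : ℕ) :
    (a ^ k).fst = a.fst ^ k := by
  induction k with
  | zero => rw [pow_zero, pow_zero]; rfl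
  | succ k ih => rw [pow_succ, pow_succ, ← ih]; rfl

/-- Idempotent powers in a block product over an aperiodic monoid `M`: if
`(m, f) = (m', f')^k` is idempotent with `k ≥ 1`, then `m = m'^k` is an idempotent of
`M`, and `f (p * m, m * q) = (f' (p * m, m * q))^k` for all `p q : M`, this element
being an idempotent of `N`. -/
theorem blockProd_idempotent_pow {M N : Type*} [Monoid M] [Monoid N]
    (hM : ∀ x : M, ∃ n : ℕ, x ^ n = x ^ (n + 1))
    (m' : M) (f' : M × M → N) (k : ℕ) (hk : 1 ≤ k) (m : M) (f : M × M → N)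
    (hpow : BlockProd.mk m f = BlockProd.mk m' f' ^ k)
    (hidem : BlockProd.mk m f * BlockProd.mk m f = BlockProd.mk m f) :
    (m = m' ^ k ∧ m * m = m) ∧
      ∀ p q : M, f (p * m, m * q) = f' (p * m, m * q) ^ k ∧
        f' (p * m, m * q) ^ k * f' (p * m, m * q) ^ k = f' (p * m, m * q) ^ k := by
  have hfst : m = m' ^ k := by
    have h := congrArg BlockProd.fst hpow
    simpa [BlockProd.pow_fst] using h
  have hsnd : f = (BlockProd.mk m' f' ^ k).snd := congrArg BlockProd.snd hpow
  have hmm : m * m = m := congrArg BlockProd.fst hidem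
  have hfidem : ∀ p q : M, f (p, m * q) * f (p * m, q) = f (p, q) := fun p q =>
    congrFun (congrArg BlockProd.snd hidem) (p, q)
  subst hsnd
  subst hfst
  obtain ⟨n, hn⟩ := hM m'
  have hstab : ∀ j, m' ^ (n + j) = m' ^ n := by
    intro j
    induction j with
    | zero => rfl
    | succ j ih => rw [← add_assoc, pow_succ, ih, ← pow_succ, ← hn]
  have hmk : ∀ t, m' ^ (k + t * k) = m' ^ k := by
    intro t
    induction t with
    | zero => rw [Nat.zero_mul, Nat.add_zero]
    | succ t ih =>
      rw [show k + (t + 1) * k = (k + t * k) + k by ring, pow_add, ih, ← pow_add]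
      have := hmm
      rw [← pow_add] at this
      exact this
  have hkn : m' ^ k = m' ^ n := by
    have h := hmk n
    have hle : n ≤ k + n * k := by nlinarith
    rw [show k + n * k = n + (k + n * k - n) by omega, hstab] at h
    exact h.symm
  have habs : ∀ i, m' ^ (k + i) = m' ^ k := by
    intro i
    rw [pow_add, hkn, ← pow_add, hstab, ← hkn]
  have hml : m' * m' ^ k = m' ^ k := by
    rw [← pow_succ']
    exact habs 1
  have hmr : ∀ j, m' ^ k * m' ^ j = m' ^ k := fun j => by rw [← pow_add]; exact habs j
  have key : ∀ (j : ℕ) (p q : M),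
      ((BlockProd.mk m' f') ^ j).snd (p * m' ^ k, m' ^ k * q) =
        f' (p * m' ^ k, m' ^ k * q) ^ j := by
    intro j
    induction j with
    | zero => intro p q; rw [pow_zero, pow_zero]; rfl
    | succ j ih =>
      intro p q
      rw [pow_succ]
      show ((BlockProd.mk m' f') ^ j).snd (p * m' ^ k, m' * (m' ^ k * q)) *
          f' (p * m' ^ k * ((BlockProd.mk m' f') ^ j).fst, m' ^ k * q) = _
      rw [BlockProd.pow_fst]
      rw [show m' * (m' ^ k * q) = m' ^ k * q from by rw [← mul_assoc, hml],
        show p * m' ^ k * m' ^ j = p * m' ^ k from by rw [mul_assoc, hmr], ih, ← pow_succ]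
  refine ⟨⟨rfl, hmm⟩, fun p q => ?_⟩
  have h1 := key k p q
  refine ⟨h1, ?_⟩
  have h := hfidem (p * m' ^ k) (m' ^ k * q)
  rw [show m' ^ k * (m' ^ k * q) = m' ^ k * q from by rw [← mul_assoc, hmm],
    show p * m' ^ k * m' ^ k = p * m' ^ k from by rw [mul_assoc, hmm]] at h
  rw [← h1]
  exact h
end

section
/- The classes Iₙ are closed under nonempty intervals: if a linear order γ belongs to Iₙ and X ⊆ γ is a nonempty convex subset (interval), then X with the induced order belongs to Iₙ. -/
section Aux

/-- Convexity predicate. -/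
def ConvOn {α : Type*} [LT α] (S : Set α) : Prop :=
  ∀ x ∈ S, ∀ y ∈ S, ∀ z, x < z → z < y → z ∈ S

lemma convOn_image {α β : Type*} [LinearOrder α] [LinearOrder β] (e : α ≃o β) {S : Set α}
    (h : ConvOn S) : ConvOn (⇑e '' S) := by
  rintro _ ⟨x, hx, rfl⟩ _ ⟨y, hy, rfl⟩ z h1 h2
  refine ⟨e.symm z, h _ hx _ hy _ ?_ ?_, e.apply_symm_apply z⟩
  · rw [← e.lt_iff_lt, e.apply_symm_apply]; exact h1
  · rw [← e.lt_iff_lt, e.apply_symm_apply]; exact h2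

lemma convOn_slice {ι : Type*} [LinearOrder ι] {β : ι → Type*} [∀ i, LinearOrder (β i)]
    {S : Set (Lex (Σ i, β i))} (h : ConvOn S) (i : ι) :
    ConvOn {x : β i | toLex ⟨i, x⟩ ∈ S} := by
  intro x hx y hy z h1 h2
  exact h _ hx _ hy (toLex ⟨i, z⟩) (Sigma.Lex.right _ _ h1) (Sigma.Lex.right _ _ h2)

/-- Restriction of an order isomorphism to a subset. -/
noncomputable def OrderIso.imageIso {α β : Type*} [LinearOrder α] [LinearOrder β]
    (e : α ≃o β) (S : Set α) : S ≃o (⇑e '' S : Set β) :=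
  StrictMono.orderIsoOfSurjective (fun x => ⟨e x.1, Set.mem_image_of_mem _ x.2⟩)
    (fun a b hab => by simpa [Subtype.mk_lt_mk, e.lt_iff_lt] using hab)
    (by rintro ⟨_, x, hx, rfl⟩; exact ⟨⟨x, hx⟩, rfl⟩)

/-- A subset of a lexicographic sigma type is isomorphic to the sigma of its slices. -/
noncomputable def sliceIso {ι : Type} [LinearOrder ι] {β : ι → Type} [∀ i, LinearOrder (β i)]
    (S : Set (Lex (Σ i, β i))) :
    S ≃o Lex (Σ i, {x : β i // toLex ⟨i, x⟩ ∈ S}) :=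
  (StrictMono.orderIsoOfSurjective
    (f := fun t : Lex (Σ i, {x : β i // toLex ⟨i, x⟩ ∈ S}) =>
      (⟨toLex ⟨(ofLex t).1, (ofLex t).2.1⟩, (ofLex t).2.2⟩ : S))
    (by
      rintro ⟨i, x, hx⟩ ⟨j, y, hy⟩ h
      rw [Subtype.mk_lt_mk]
      cases h with
      | left _ _ hij => exact Sigma.Lex.left _ _ hij
      | right _ _ hxy => exact Sigma.Lex.right _ _ hxy)
    (by rintro ⟨⟨i, x⟩, hs⟩; exact ⟨toLex ⟨i, ⟨x, hs⟩⟩, rfl⟩)).symm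

/-- Extending a lexicographic sum along a strictly monotone reindexing that hits every
nonempty summand. -/
noncomputable def embIso {ι ι' : Type} [LinearOrder ι] [LinearOrder ι'] (f : ι' → ι)
    (hmono : StrictMono f) (β : ι → Type) [∀ i, LinearOrder (β i)]
    (hf : ∀ i, Nonempty (β i) → ∃ i', f i' = i) :
    Lex ((i' : ι') × β (f i')) ≃o Lex ((i : ι) × β i) :=
  StrictMono.orderIsoOfSurjective
    (f := fun t => toLex ⟨f (ofLex t).1, (ofLex t).2⟩)
    (by
      rintro ⟨i, x⟩ ⟨j, y⟩ h
      cases h with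
      | left _ _ hij => exact Sigma.Lex.left _ _ (hmono hij)
      | right _ _ hxy => exact Sigma.Lex.right _ _ hxy)
    (by
      rintro ⟨i, x⟩
      obtain ⟨i', rfl⟩ := hf i ⟨x⟩
      exact ⟨toLex ⟨i', x⟩, rfl⟩)

end Aux


/-- `γ` is (isomorphic to) a generalized sum `Σ_{i ∈ ℤ} β i` in which every summand is
either empty or satisfies the predicate `P`, and not all summands are empty. -/
def IsZSum (P : ∀ (α : Type) [LinearOrder α], Prop) (γ : Type) [LinearOrder γ] : Prop :=
  ∃ (β : ℤ → Type) (_ : ∀ i, LinearOrder (β i)),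
    (∀ i, IsEmpty (β i) ∨ P (β i)) ∧ (∃ i, Nonempty (β i)) ∧
      Nonempty (γ ≃o Lex (Σ i, β i))

/-- Membership in the class `Iₙ` (closed under order isomorphism): `I₀` is the class of
nonempty finite linear orders; `I_{n+1}` consists of the finite sums of generalized sums
`Σ_{i ∈ ℤ} β i` whose summands are empty or in `Iₙ`, not all empty. -/
def MemI : ℕ → ∀ (γ : Type) [LinearOrder γ], Prop
  | 0, γ, _ => Finite γ ∧ Nonempty γ
  | n + 1, γ, _ =>
      ∃ k : ℕ, 0 < k ∧ ∃ (δ : Fin k → Type) (_ : ∀ j, LinearOrder (δ j)),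
        (∀ j, IsZSum (MemI n) (δ j)) ∧ Nonempty (γ ≃o Lex (Σ j, δ j))

theorem memI_of_interval_aux :
    ∀ n : ℕ, ∀ (γ : Type) [LinearOrder γ], MemI n γ → ∀ X : Set γ, X.Nonempty →
      ConvOn X → MemI n X := by
  intro n
  induction n with
  | zero =>
    intro γ _ h X hne _
    haveI : Finite γ := h.1
    exact ⟨Subtype.finite, hne.to_subtype⟩
  | succ n ih =>
    intro γ _ h X hne hconv
    classical
    obtain ⟨k, hk, δ, instδ, hδ, ⟨e⟩⟩ := h
    set S : Set (Lex (Σ j, δ j)) := ⇑e '' X with hS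
    have hSconv : ConvOn S := convOn_image e hconv
    have hSne : S.Nonempty := hne.image _
    set Sset : ∀ j, Set (δ j) := fun j => {x : δ j | toLex ⟨j, x⟩ ∈ S} with hSset
    set J : Finset (Fin k) := Finset.univ.filter (fun j => (Sset j).Nonempty) with hJ
    have hJne : J.Nonempty := by
      obtain ⟨s, hs⟩ := hSne
      refine ⟨(ofLex s).1, ?_⟩
      simp only [hJ, Finset.mem_filter, Finset.mem_univ, true_and]
      exact ⟨(ofLex s).2, hs⟩
    set k' : ℕ := J.card with hk'def
    have hk' : 0 < k' := Finset.card_pos.mpr hJne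
    set g : Fin k' ≃o ↥(J : Finset (Fin k)) := J.orderIsoOfFin rfl with hg
    set f : Fin k' → Fin k := fun j' => (g j' : Fin k) with hf
    have hfmono : StrictMono f := fun a b hab => g.strictMono hab
    have hrange : ∀ j : Fin k, (Sset j).Nonempty → ∃ j', f j' = j := by
      intro j hj
      have hjJ : j ∈ J := by simp [hJ, hj]
      exact ⟨g.symm ⟨j, hjJ⟩, by simp [hf]⟩
    refine ⟨k', hk', fun j' => ↥(Sset (f j')), fun j' => inferInstance, ?_, ?_⟩
    · -- each slice is a Z-sum
      intro j'
      set j : Fin k := f j' with hj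
      have hjne : (Sset j).Nonempty := by
        have : j ∈ J := by simp only [hf, hj]; exact (g j').2
        simpa [hJ] using this
      obtain ⟨β, instβ, hβ, -, ⟨ej⟩⟩ := hδ j
      set Z : Set (Lex (Σ i, β i)) := ⇑ej '' (Sset j) with hZ
      have hZconv : ConvOn Z := convOn_image ej (convOn_slice hSconv j)
      have hZne : Z.Nonempty := hjne.image _
      refine ⟨fun i => {x : β i | toLex ⟨i, x⟩ ∈ Z}, fun i => inferInstance, ?_, ?_, ?_⟩
      · intro i
        rcases hβ i with hE | hP
        · left; exact Subtype.isEmpty_of_false fun x _ => hE.elim x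
        · by_cases hzne : {x : β i | toLex ⟨i, x⟩ ∈ Z}.Nonempty
          · right; exact ih (β i) hP _ hzne (convOn_slice hZconv i)
          · left
            rw [Set.not_nonempty_iff_eq_empty] at hzne
            exact Set.isEmpty_coe_sort.mpr hzne
      · obtain ⟨z, hz⟩ := hZne
        exact ⟨(ofLex z).1, ⟨⟨(ofLex z).2, hz⟩⟩⟩
      · exact ⟨((ej.imageIso (Sset j)).trans (sliceIso Z))⟩
    · -- the global isomorphism
      refine ⟨((e.imageIso X).trans (sliceIso S)).trans ?_⟩
      exact (embIso f hfmono (fun j => ↥(Sset j)) (fun j hj => hrange j (Set.nonempty_coe_sort.mp hj))).symm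

/-- The classes `Iₙ` are closed under nonempty intervals: a nonempty convex subset of a
member of `Iₙ`, with the induced order, again belongs to `Iₙ`. -/
theorem memI_of_interval (n : ℕ) (γ : Type) [LinearOrder γ] (h : MemI n γ)
    (X : Set γ) (hne : X.Nonempty)
    (hconv : ∀ x ∈ X, ∀ y ∈ X, ∀ z, x < z → z < y → z ∈ X) :
    MemI n X :=
  memI_of_interval_aux n γ h X hne hconv
end

section
/- Infinitary rank of a binary sum is the maximum of the ranks: if α and β are nonempty linear orders with infinitary rank j and j' respectively (both finite), then the sum α + β has infinitary rank max(j, j'). -/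
set_option linter.unusedSectionVars false

section IsoTools

variable {ι ι' : Type} [LinearOrder ι] [LinearOrder ι']

/-- snd comparison in a lex sigma when fst's agree. -/
theorem sigma_snd_lt {f : ι → Type} [∀ i, LinearOrder (f i)] {a b : Lex (Σ i, f i)}
    (hab : a < b) {i : ι} (ha : (ofLex a).1 = i) (hb : (ofLex b).1 = i) :
    (ha ▸ (ofLex a).2) < (hb ▸ (ofLex b).2) := by
  obtain ⟨ia, ua⟩ := a
  obtain ⟨ib, ub⟩ := b
  change ia = i at ha
  change ib = i at hb
  subst ha; subst hb
  rcases Sigma.Lex.lt_def.1 hab with h1 | ⟨h1, h2⟩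
  · exact absurd h1 (lt_irrefl _)
  · exact h2

noncomputable def sigmaLexCongr {f : ι → Type} {g : ι' → Type}
    [∀ i, LinearOrder (f i)] [∀ i, LinearOrder (g i)]
    (e : ι ≃o ι') (h : ∀ i, f i ≃o g (e i)) :
    Lex (Σ i, f i) ≃o Lex (Σ i, g i) := by
  refine StrictMono.orderIsoOfSurjective
    (fun x => toLex ⟨e x.1, h x.1 x.2⟩) ?_ ?_
  · rintro ⟨ia, ua⟩ ⟨ib, ub⟩ hab
    rcases Sigma.Lex.lt_def.1 hab with h1 | ⟨h1, h2⟩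
    · exact Sigma.Lex.lt_def.2 (Or.inl (e.strictMono h1))
    · dsimp at h1; subst h1
      exact Sigma.Lex.lt_def.2 (Or.inr ⟨rfl, (h ia).strictMono h2⟩)
  · rintro ⟨i', v⟩
    obtain ⟨i, rfl⟩ := e.surjective i'
    exact ⟨toLex ⟨i, (h i).symm v⟩,
      congrArg toLex (Sigma.ext rfl (heq_of_eq ((h i).apply_symm_apply v)))⟩

noncomputable def dropEmptyIso {f : ι → Type} [∀ i, LinearOrder (f i)] :
    Lex (Σ i, f i) ≃o Lex (Σ i : {i // Nonempty (f i)}, f i.1) := by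
  refine StrictMono.orderIsoOfSurjective (fun x => toLex ⟨⟨x.1, ⟨x.2⟩⟩, x.2⟩) ?_ ?_
  · rintro ⟨ia, ua⟩ ⟨ib, ub⟩ hab
    rcases Sigma.Lex.lt_def.1 hab with h1 | ⟨h1, h2⟩
    · exact Sigma.Lex.lt_def.2 (Or.inl (Subtype.mk_lt_mk.2 h1))
    · dsimp at h1; subst h1
      exact Sigma.Lex.lt_def.2 (Or.inr ⟨rfl, h2⟩)
  · rintro ⟨⟨i, hi⟩, u⟩
    exact ⟨toLex ⟨i, u⟩, rfl⟩

variable {γ : Type} [LinearOrder γ]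

theorem cast_mk_lt {P : γ → ι → Prop} {i j : ι} (h : i = j) (x y : γ)
    (hx : P x i) (hy : P y j) (hxy : x < y) :
    (h ▸ (⟨x, hx⟩ : {z // P z i}) : {z // P z j}) < ⟨y, hy⟩ := by
  subst h; exact Subtype.mk_lt_mk.2 hxy

/-- Decompose an order embedded in a lex sigma into its fibers. -/
noncomputable def fiberDecomp {f : ι → Type} [∀ i, LinearOrder (f i)]
    (φ : γ ↪o Lex (Σ i, f i)) :
    γ ≃o Lex (Σ i, {x : γ // (ofLex (φ x)).1 = i}) := by
  refine StrictMono.orderIsoOfSurjective (fun x => toLex ⟨(ofLex (φ x)).1, ⟨x, rfl⟩⟩) ?_ ?_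
  · intro x y hxy
    have hφ := φ.strictMono hxy
    rcases Sigma.Lex.lt_def.1 hφ with h1 | ⟨h1, h2⟩
    · exact Sigma.Lex.lt_def.2 (Or.inl h1)
    · exact Sigma.Lex.lt_def.2 (Or.inr ⟨h1, cast_mk_lt h1 x y rfl rfl hxy⟩)
  · rintro ⟨i, ⟨x, hx⟩⟩
    subst hx
    exact ⟨x, rfl⟩

/-- Each fiber embeds into the corresponding summand. -/
noncomputable def fiberEmb {f : ι → Type} [∀ i, LinearOrder (f i)]
    (φ : γ ↪o Lex (Σ i, f i)) (i : ι) :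
    {x : γ // (ofLex (φ x)).1 = i} ↪o f i := by
  refine OrderEmbedding.ofStrictMono (fun x => x.2 ▸ (ofLex (φ x.1)).2) ?_
  intro x y hxy
  exact sigma_snd_lt (φ.strictMono (Subtype.coe_lt_coe.2 hxy)) x.2 y.2

noncomputable def finOneSigma : γ ≃o Lex (Σ _ : Fin 1, γ) := by
  refine StrictMono.orderIsoOfSurjective (fun x => toLex ⟨0, x⟩) ?_ ?_
  · intro x y hxy
    exact Sigma.Lex.lt_def.2 (Or.inr ⟨rfl, hxy⟩)
  · rintro ⟨j, x⟩
    obtain rfl : (0 : Fin 1) = j := Subsingleton.elim _ _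
    exact ⟨x, rfl⟩

noncomputable def trueSubtypeIso {p : Prop} (hp : p) : {_x : γ // p} ≃o γ := by
  refine StrictMono.orderIsoOfSurjective Subtype.val (fun a b h => Subtype.coe_lt_coe.2 h) ?_
  exact fun x => ⟨⟨x, hp⟩, rfl⟩

noncomputable def sumLexCongr' {a b c d : Type} [LinearOrder a] [LinearOrder b]
    [LinearOrder c] [LinearOrder d] (e1 : a ≃o c) (e2 : b ≃o d) :
    Lex (a ⊕ b) ≃o Lex (c ⊕ d) := by
  refine StrictMono.orderIsoOfSurjective (fun x => toLex (Sum.map e1 e2 (ofLex x))) ?_ ?_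
  · rintro (xa | xb) (ya | yb) h
    · exact Sum.Lex.inl_lt_inl_iff.2 (e1.strictMono (Sum.Lex.inl_lt_inl_iff.1 h))
    · exact Sum.Lex.inl_lt_inr _ _
    · exact absurd h Sum.Lex.not_inr_lt_inl
    · exact Sum.Lex.inr_lt_inr_iff.2 (e2.strictMono (Sum.Lex.inr_lt_inr_iff.1 h))
  · rintro (xc | xd)
    · exact ⟨toLex (Sum.inl (e1.symm xc)), by dsimp; rw [e1.apply_symm_apply]; rfl⟩
    · exact ⟨toLex (Sum.inr (e2.symm xd)), by dsimp; rw [e2.apply_symm_apply]; rfl⟩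

instance sumElimLinearOrder {f : ι → Type} {g : ι' → Type}
    [∀ i, LinearOrder (f i)] [∀ i, LinearOrder (g i)] :
    ∀ x : ι ⊕ ι', LinearOrder (Sum.elim f g x)
  | Sum.inl a => inferInstanceAs (LinearOrder (f a))
  | Sum.inr b => inferInstanceAs (LinearOrder (g b))

noncomputable def sumSigmaIso {f : ι → Type} {g : ι' → Type}
    [∀ i, LinearOrder (f i)] [∀ i, LinearOrder (g i)] :
    Lex (Lex (Σ i, f i) ⊕ Lex (Σ i', g i')) ≃o
      Lex (Σ x : Lex (ι ⊕ ι'), Sum.elim f g (ofLex x)) := by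
  refine StrictMono.orderIsoOfSurjective
    (fun x => Sum.elim (fun s : Σ i, f i => toLex ⟨toLex (Sum.inl s.1), s.2⟩)
      (fun s : Σ i', g i' => toLex ⟨toLex (Sum.inr s.1), s.2⟩) (ofLex x)) ?_ ?_
  · rintro (⟨ia, ua⟩ | ⟨ia, ua⟩) (⟨ja, va⟩ | ⟨ja, va⟩) h
    · rcases Sigma.Lex.lt_def.1 (Sum.Lex.inl_lt_inl_iff.1 h) with h1 | ⟨h1, h2⟩
      · exact Sigma.Lex.lt_def.2 (Or.inl (Sum.Lex.inl_lt_inl_iff.2 h1))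
      · dsimp at h1; subst h1
        exact Sigma.Lex.lt_def.2 (Or.inr ⟨rfl, h2⟩)
    · exact Sigma.Lex.lt_def.2 (Or.inl (Sum.Lex.inl_lt_inr _ _))
    · exact absurd h Sum.Lex.not_inr_lt_inl
    · rcases Sigma.Lex.lt_def.1 (Sum.Lex.inr_lt_inr_iff.1 h) with h1 | ⟨h1, h2⟩
      · exact Sigma.Lex.lt_def.2 (Or.inl (Sum.Lex.inr_lt_inr_iff.2 h1))
      · dsimp at h1; subst h1
        exact Sigma.Lex.lt_def.2 (Or.inr ⟨rfl, h2⟩)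
  · rintro ⟨(i | i'), u⟩
    · exact ⟨toLex (Sum.inl ⟨i, u⟩), rfl⟩
    · exact ⟨toLex (Sum.inr ⟨i', u⟩), rfl⟩

end IsoTools

section MemILemmas

theorem isZSum_congr {P : ∀ (α : Type) [LinearOrder α], Prop} {γ δ : Type}
    [LinearOrder γ] [LinearOrder δ] (e : γ ≃o δ) (h : IsZSum P δ) : IsZSum P γ := by
  obtain ⟨β, inst, h1, h2, ⟨iso⟩⟩ := h
  exact ⟨β, inst, h1, h2, ⟨e.trans iso⟩⟩

theorem memI_congr : ∀ (n : ℕ) {γ δ : Type} [LinearOrder γ] [LinearOrder δ],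
    (γ ≃o δ) → MemI n δ → MemI n γ := by
  intro n
  cases n with
  | zero =>
    intro γ δ _ _ e h
    haveI : Finite δ := h.1
    exact ⟨Finite.of_injective e e.injective, ⟨e.symm (Classical.choice h.2)⟩⟩
  | succ n =>
    intro γ δ _ _ e h
    obtain ⟨k, hk, δf, inst, hz, ⟨iso⟩⟩ := h
    exact ⟨k, hk, δf, inst, hz, ⟨e.trans iso⟩⟩

theorem isZSum_nonempty {P : ∀ (α : Type) [LinearOrder α], Prop} {γ : Type} [LinearOrder γ]
    (h : IsZSum P γ) : Nonempty γ := by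
  obtain ⟨β, inst, _, ⟨i, ⟨b⟩⟩, ⟨iso⟩⟩ := h
  exact ⟨iso.symm (toLex ⟨i, b⟩)⟩

theorem memI_nonempty : ∀ (n : ℕ) {γ : Type} [LinearOrder γ], MemI n γ → Nonempty γ := by
  intro n
  cases n with
  | zero => intro γ _ h; exact h.2
  | succ n =>
    intro γ _ h
    obtain ⟨k, hk, δf, inst, hz, ⟨iso⟩⟩ := h
    obtain ⟨b⟩ := isZSum_nonempty (hz ⟨0, hk⟩)
    exact ⟨iso.symm (toLex ⟨⟨0, hk⟩, b⟩)⟩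

theorem isZSum_of_memI {n : ℕ} {γ : Type} [LinearOrder γ] (h : MemI n γ) :
    IsZSum (MemI n) γ := by
  refine ⟨fun i => {_x : γ // i = 0}, fun i => inferInstance, ?_, ?_, ?_⟩
  · intro i
    by_cases hi : i = 0
    · subst hi
      exact Or.inr (memI_congr n (trueSubtypeIso rfl) h)
    · exact Or.inl ⟨fun x => hi x.2⟩
  · exact ⟨0, ⟨⟨Classical.choice (memI_nonempty n h), rfl⟩⟩⟩
  · refine ⟨?_⟩
    refine StrictMono.orderIsoOfSurjective (fun x => toLex ⟨0, ⟨x, rfl⟩⟩) ?_ ?_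
    · intro x y hxy
      exact Sigma.Lex.lt_def.2 (Or.inr ⟨rfl, Subtype.mk_lt_mk.2 hxy⟩)
    · rintro ⟨i, ⟨x, hi⟩⟩
      subst hi
      exact ⟨x, rfl⟩

theorem memI_succ {n : ℕ} {γ : Type} [LinearOrder γ] (h : MemI n γ) : MemI (n + 1) γ :=
  ⟨1, one_pos, fun _ => γ, fun _ => inferInstance, fun _ => isZSum_of_memI h, ⟨finOneSigma⟩⟩

theorem memI_mono {m n : ℕ} (hmn : m ≤ n) {γ : Type} [LinearOrder γ] (h : MemI m γ) :
    MemI n γ := by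
  induction hmn with
  | refl => exact h
  | step _ ih => exact memI_succ (by exact ih)

end MemILemmas

section Closure

theorem memI_of_emb : ∀ (n : ℕ) {γ δ : Type} [LinearOrder γ] [LinearOrder δ],
    Nonempty γ → (γ ↪o δ) → MemI n δ → MemI n γ := by
  intro n
  induction n with
  | zero =>
    intro γ δ _ _ hne φ h
    haveI : Finite δ := h.1
    exact ⟨Finite.of_injective φ φ.injective, hne⟩
  | succ n ih =>
    intro γ δ _ _ hne φ h
    obtain ⟨k, hk, δf, instδ, hz, ⟨iso⟩⟩ := h
    let ψ : γ ↪o Lex (Σ j, δf j) := φ.trans iso.toOrderEmbedding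
    let F : Fin k → Type := fun j => {x : γ // (ofLex (ψ x)).1 = j}
    have hF : ∀ j, Nonempty (F j) → IsZSum (MemI n) (F j) := by
      intro j hj
      obtain ⟨β, instβ, hβ, _, ⟨isoZ⟩⟩ := hz j
      let χ : F j ↪o Lex (Σ i, β i) := (fiberEmb ψ j).trans isoZ.toOrderEmbedding
      refine ⟨fun i => {x : F j // (ofLex (χ x)).1 = i}, fun i => inferInstance, ?_, ?_,
        ⟨fiberDecomp χ⟩⟩
      · intro i
        by_cases hGi : Nonempty {x : F j // (ofLex (χ x)).1 = i}
        · rcases hβ i with hempty | hmem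
          · obtain ⟨x⟩ := hGi
            exact absurd ⟨fiberEmb χ i x⟩ (not_nonempty_iff.2 hempty)
          · exact Or.inr (ih hGi (fiberEmb χ i) hmem)
        · exact Or.inl (not_nonempty_iff.1 hGi)
      · obtain ⟨x⟩ := hj
        exact ⟨(ofLex (χ x)).1, ⟨⟨x, rfl⟩⟩⟩
    let s := {j : Fin k // Nonempty (F j)}
    haveI : Fintype s := Fintype.ofFinite s
    have hsne : Nonempty s := by
      obtain ⟨x⟩ := hne
      exact ⟨⟨(ofLex (ψ x)).1, ⟨⟨x, rfl⟩⟩⟩⟩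
    let e : Fin (Fintype.card s) ≃o s := Fintype.orderIsoFinOfCardEq s rfl
    refine ⟨Fintype.card s, Fintype.card_pos_iff.2 hsne, fun j' => F (e j').1,
      fun j' => inferInstance, fun j' => hF _ (e j').2, ?_⟩
    exact ⟨(fiberDecomp ψ).trans (dropEmptyIso.trans
      (sigmaLexCongr e (fun j' => OrderIso.refl _)).symm)⟩

theorem memI_sum : ∀ (n : ℕ) {α β : Type} [LinearOrder α] [LinearOrder β],
    MemI n α → MemI n β → MemI n (Lex (α ⊕ β)) := by
  intro n
  cases n with
  | zero =>
    intro α β _ _ ha hb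
    haveI : Finite α := ha.1
    haveI : Finite β := hb.1
    refine ⟨Finite.of_equiv (α ⊕ β) toLex, ⟨toLex (Sum.inl (Classical.choice ha.2))⟩⟩
  | succ n =>
    intro α β _ _ ha hb
    obtain ⟨k, hk, δ1, inst1, hz1, ⟨iso1⟩⟩ := ha
    obtain ⟨k', hk', δ2, inst2, hz2, ⟨iso2⟩⟩ := hb
    have hall : ∀ x : Fin k ⊕ Fin k', IsZSum (MemI n) (Sum.elim δ1 δ2 x) := by
      rintro (a | b)
      · exact hz1 a
      · exact hz2 b
    haveI : Fintype (Lex (Fin k ⊕ Fin k')) := Fintype.ofEquiv _ toLex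
    have hpos : 0 < Fintype.card (Lex (Fin k ⊕ Fin k')) :=
      Fintype.card_pos_iff.2 ⟨toLex (Sum.inl ⟨0, hk⟩)⟩
    let e : Fin (Fintype.card (Lex (Fin k ⊕ Fin k'))) ≃o Lex (Fin k ⊕ Fin k') :=
      Fintype.orderIsoFinOfCardEq _ rfl
    refine ⟨_, hpos, fun j => Sum.elim δ1 δ2 (ofLex (e j)), fun j => inferInstance,
      fun j => hall (ofLex (e j)), ?_⟩
    exact ⟨(sumLexCongr' iso1 iso2).trans (sumSigmaIso.trans
      (sigmaLexCongr e (fun j => OrderIso.refl _)).symm)⟩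

end Closure

theorem hasRank_sum' (j j' : ℕ) (α β : Type) [LinearOrder α] [LinearOrder β]
    [Nonempty α] [Nonempty β] (hα : MemI j α ∧ ∀ m, m < j → ¬ MemI m α)
    (hβ : MemI j' β ∧ ∀ m, m < j' → ¬ MemI m β) :
    MemI (max j j') (Lex (α ⊕ β)) ∧ ∀ m, m < max j j' → ¬ MemI m (Lex (α ⊕ β)) := by
  constructor
  · exact memI_sum _ (memI_mono (le_max_left j j') hα.1) (memI_mono (le_max_right j j') hβ.1)
  · intro m hm hmem
    rcases lt_max_iff.1 hm with h | h
    · exact hα.2 m h (memI_of_emb m ‹Nonempty α›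
        (OrderEmbedding.ofStrictMono _ Sum.Lex.inl_strictMono) hmem)
    · exact hβ.2 m h (memI_of_emb m ‹Nonempty β›
        (OrderEmbedding.ofStrictMono _ Sum.Lex.inr_strictMono) hmem)


/-- The infinitary rank of a linear order is `j` if it belongs to `I_j` but to no `I_m`
with `m < j`. -/
def HasRank (j : ℕ) (γ : Type) [LinearOrder γ] : Prop :=
  MemI j γ ∧ ∀ m, m < j → ¬ MemI m γ

/-- The infinitary rank of a binary (lexicographic) sum of nonempty linear orders is the
maximum of the ranks of the summands. -/
theorem hasRank_sum (j j' : ℕ) (α β : Type) [LinearOrder α] [LinearOrder β]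
    [Nonempty α] [Nonempty β] (hα : HasRank j α) (hβ : HasRank j' β) :
    HasRank (max j j') (Lex (α ⊕ β)) := by
  constructor
  · exact memI_sum _ (memI_mono (le_max_left j j') hα.1) (memI_mono (le_max_right j j') hβ.1)
  · intro m hm hmem
    rcases lt_max_iff.1 hm with h | h
    · exact hα.2 m h (memI_of_emb m ‹Nonempty α›
        (OrderEmbedding.ofStrictMono _ Sum.Lex.inl_strictMono) hmem)
    · exact hβ.2 m h (memI_of_emb m ‹Nonempty β›
        (OrderEmbedding.ofStrictMono _ Sum.Lex.inr_strictMono) hmem)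
end

section
/- An ω-sum with infinitely many blocks of rank k has rank k + 1: let k ≥ 1 and let (βᵢ)_{i∈ℕ} be linear orders such that every βᵢ is either empty or belongs to I_k, and such that for infinitely many i the order βᵢ is nonempty and does not belong to I_{k-1}. Then the generalized sum Σ_{i∈ℕ} βᵢ (the sigma type over ℕ with the lexicographic order) has infinitary rank exactly k + 1, i.e. it belongs to I_{k+1} but not to I_k. -/
namespace OSR

/-- helper: value of a cast in a fiber subtype -/
theorem rec_val {γ I : Type*} (f : γ → I) {i j : I} (h : i = j) (x : {x : γ // f x = i}) :
    (h ▸ x : {x : γ // f x = j}).1 = x.1 := by cases h; rfl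

/-- Fiber decomposition order iso for a monotone map. -/
def fiberIso {γ I : Type*} [LinearOrder γ] [LinearOrder I] (f : γ → I) (hf : Monotone f) :
    γ ≃o Lex (Σ i : I, {x : γ // f x = i}) where
  toFun x := ⟨f x, x, rfl⟩
  invFun p := p.2.1
  left_inv x := rfl
  right_inv := by rintro ⟨i, x, rfl⟩; rfl
  map_rel_iff' := by
    intro a b
    simp only [Equiv.coe_fn_mk, Sigma.Lex.le_def]
    constructor
    · rintro (h | ⟨h, h2⟩)
      · by_contra hle
        exact absurd (hf (le_of_not_ge hle)) (not_le_of_gt h)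
      · have := Subtype.coe_le_coe.mpr h2
        rwa [rec_val f h _] at this
    · intro h
      rcases lt_or_eq_of_le (hf h) with h' | h'
      · exact Or.inl h'
      · refine Or.inr ⟨h', ?_⟩
        rw [← Subtype.coe_le_coe, rec_val f h' _]
        exact h

/-- A fiber of the first projection of a lex sigma, with an extra predicate. -/
def fstFiberIsoP {I : Type*} [LinearOrder I] (β : I → Type*) [∀ i, LinearOrder (β i)]
    (P : ∀ i, β i → Prop) (i : I) :
    {b : β i // P i b} ≃o {x : Lex (Σ j, β j) // x.1 = i ∧ P x.1 x.2} where
  toFun b := ⟨⟨i, b.1⟩, rfl, b.2⟩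
  invFun x := x.2.1 ▸ (⟨x.1.2, x.2.2⟩ : {b : β x.1.1 // P x.1.1 b})
  left_inv b := rfl
  right_inv := by rintro ⟨⟨j, b⟩, h, hp⟩; cases h; rfl
  map_rel_iff' := by
    intro a b
    simp only [Equiv.coe_fn_mk, ← Subtype.coe_le_coe, Sigma.Lex.le_def]
    simp
    exact ⟨fun h => by
      rcases Sigma.Lex.le_def.mp h with h | ⟨_, h⟩
      exacts [absurd h (lt_irrefl _), h], fun h => Sigma.Lex.le_def.mpr (Or.inr ⟨rfl, h⟩)⟩

/-- A fiber of the first projection of a lex sigma. -/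
def fstFiberIso {I : Type*} [LinearOrder I] (β : I → Type*) [∀ i, LinearOrder (β i)] (i : I) :
    β i ≃o {x : Lex (Σ j, β j) // x.1 = i} where
  toFun b := ⟨⟨i, b⟩, rfl⟩
  invFun x := x.2 ▸ x.1.2
  left_inv b := rfl
  right_inv := by rintro ⟨⟨j, b⟩, h⟩; cases h; rfl
  map_rel_iff' := by
    intro a b
    simp only [Equiv.coe_fn_mk, ← Subtype.coe_le_coe, Sigma.Lex.le_def]
    exact ⟨fun h => by
      rcases Sigma.Lex.le_def.mp h with h | ⟨_, h⟩
      exacts [absurd h (lt_irrefl _), h], fun h => Sigma.Lex.le_def.mpr (Or.inr ⟨rfl, h⟩)⟩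


/-- Transport a subtype along an order iso. -/
def preimageIso {γ γ' : Type*} [LinearOrder γ] [LinearOrder γ'] (e : γ ≃o γ') (S : Set γ') :
    {x : γ // e x ∈ S} ≃o S where
  toFun x := ⟨e x.1, x.2⟩
  invFun y := ⟨e.symm y.1, by simpa using y.2⟩
  left_inv x := by ext; simp
  right_inv y := by ext; simp
  map_rel_iff' := by intro a b; simp [← Subtype.coe_le_coe]

/-- Nested subtype iso. -/
def nestIso {γ : Type*} [LinearOrder γ] (s : Set γ) (p : γ → Prop) :
    {x : ↥s // p ↑x} ≃o {x : γ // x ∈ s ∧ p x} where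
  toFun x := ⟨x.1.1, x.1.2, x.2⟩
  invFun x := ⟨⟨x.1, x.2.1⟩, x.2.2⟩
  left_inv x := rfl
  right_inv x := rfl
  map_rel_iff' := Iff.rfl

/-- subtype congr -/
def congrIso {γ : Type*} [LinearOrder γ] {s t : Set γ} (h : ∀ x, x ∈ s ↔ x ∈ t) : ↥s ≃o ↥t :=
  OrderIso.setCongr s t (Set.ext h)

/-- congruence of lex sigma under summand isos -/
def sigmaLexCongr {I : Type*} [LinearOrder I] {X Y : I → Type*}
    [∀ i, LinearOrder (X i)] [∀ i, LinearOrder (Y i)] (h : ∀ i, X i ≃o Y i) :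
    Lex (Σ i, X i) ≃o Lex (Σ i, Y i) where
  toFun x := ⟨x.1, h x.1 x.2⟩
  invFun y := ⟨y.1, (h y.1).symm y.2⟩
  left_inv := by rintro ⟨i, x⟩; simp; rfl
  right_inv := by rintro ⟨i, y⟩; simp; rfl
  map_rel_iff' := by
    rintro ⟨i, x⟩ ⟨j, y⟩
    change Sigma.Lex (· < ·) (fun _ => (· ≤ ·)) (⟨i, h i x⟩ : Σ i, Y i) ⟨j, h j y⟩ ↔
      Sigma.Lex (· < ·) (fun _ => (· ≤ ·)) (⟨i, x⟩ : Σ i, X i) ⟨j, y⟩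
    simp only [Sigma.lex_iff]
    constructor
    · rintro (hij | ⟨hij, h2⟩)
      · exact Or.inl hij
      · subst hij
        exact Or.inr ⟨rfl, by simpa using h2⟩
    · rintro (hij | ⟨hij, h2⟩)
      · exact Or.inl hij
      · subst hij
        exact Or.inr ⟨rfl, by simpa using h2⟩

theorem sigma_fst_mono {I : Type*} [LinearOrder I] {X : I → Type*} [∀ i, LinearOrder (X i)]
    {a b : Lex (Σ i, X i)} (h : a ≤ b) : a.1 ≤ b.1 := by
  rcases Sigma.Lex.le_def.mp h with h | ⟨h, _⟩
  exacts [le_of_lt h, le_of_eq h]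

theorem prodlex_fst_mono {J β : Type*} [LinearOrder J] [LinearOrder β] {a b : J ×ₗ β}
    (h : a ≤ b) : (ofLex a).1 ≤ (ofLex b).1 := by
  rcases Prod.Lex.le_iff (x := a) (y := b) |>.mp h with h | ⟨h, _⟩
  exacts [le_of_lt h, le_of_eq h]

theorem prodlex_snd_mono {J β : Type*} [LinearOrder J] [LinearOrder β] {a b : J ×ₗ β}
    (h : a ≤ b) (h2 : (ofLex a).1 = (ofLex b).1) : (ofLex a).2 ≤ (ofLex b).2 := by
  rcases Prod.Lex.le_iff (x := a) (y := b) |>.mp h with h | ⟨h, h3⟩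
  · exact absurd h2 (ne_of_lt h)
  · exact h3

/-- The fiber-map characterization of the classes `Iₙ`. -/
def Rk : ℕ → ∀ (γ : Type) [LinearOrder γ], Prop
  | 0, γ, _ => Finite γ ∧ Nonempty γ
  | n + 1, γ, _ =>
      Nonempty γ ∧ ∃ (J : Type) (_ : LinearOrder J), Finite J ∧
        ∃ f : γ → J ×ₗ ℤ, Monotone f ∧
          ∀ p : J ×ₗ ℤ, (f ⁻¹' {p}).Nonempty → Rk n ↥(f ⁻¹' {p})

theorem rk_congr : ∀ (n : ℕ) {γ γ' : Type} [LinearOrder γ] [LinearOrder γ']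
    (e : γ ≃o γ'), Rk n γ → Rk n γ'
  | 0, γ, γ', _, _, e, ⟨h1, h2⟩ => ⟨@Finite.of_equiv γ' γ h1 e.toEquiv, h2.map e⟩
  | n + 1, γ, γ', _, _, e, ⟨h1, J, _, hJ, f, hf, hfib⟩ => by
    refine ⟨h1.map e, J, ‹_›, hJ, f ∘ e.symm, hf.comp e.symm.monotone, fun p hp => ?_⟩
    have e2 : ↥((f ∘ ⇑e.symm) ⁻¹' {p}) ≃o ↥(f ⁻¹' {p}) := preimageIso e.symm (f ⁻¹' {p})
    refine rk_congr n e2.symm (hfib p ?_)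
    obtain ⟨y, hy⟩ := hp
    exact ⟨e.symm y, hy⟩

theorem memI_congr {n : ℕ} {γ γ' : Type} [LinearOrder γ] [LinearOrder γ']
    (e : γ ≃o γ') (h : MemI n γ) : MemI n γ' := by
  cases n with
  | zero => exact ⟨@Finite.of_equiv γ' γ h.1 e.toEquiv, h.2.map e⟩
  | succ n =>
    obtain ⟨k, hk, δ, instδ, hδ, ⟨g⟩⟩ := h
    exact ⟨k, hk, δ, instδ, hδ, ⟨e.symm.trans g⟩⟩


theorem sigma_snd_le {I : Type*} [LinearOrder I] {X : I → Type*} [∀ i, LinearOrder (X i)]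
    {i : I} {a b : X i} (h : (toLex ⟨i, a⟩ : Σₗ i, X i) ≤ toLex ⟨i, b⟩) : a ≤ b := by
  have h' : Sigma.Lex (· < ·) (fun _ => (· ≤ ·)) ⟨i, a⟩ ⟨i, b⟩ := h
  cases h' with
  | left a b h1 => exact absurd h1 (lt_irrefl _)
  | right a b h1 => exact h1

theorem prodlex_eq {K B : Type*} (w : K ×ₗ B) (a : K) (b : B)
    (h1 : (ofLex w).1 = a) (h2 : (ofLex w).2 = b) : w = toLex (a, b) :=
  congrArg toLex (Prod.ext h1 h2)

/-- Rk is inherited by nonempty order-connected subsets. -/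
theorem rk_subtype : ∀ (n : ℕ) {γ : Type} [LinearOrder γ] (s : Set γ),
    s.OrdConnected → s.Nonempty → Rk n γ → Rk n ↥s
  | 0, γ, _, s, hc, hne, ⟨h1, _⟩ => ⟨@Subtype.finite γ h1 _, hne.to_subtype⟩
  | n + 1, γ, _, s, hc, hne, ⟨h1, J, instJ, hJ, f, hf, hfib⟩ => by
    refine ⟨hne.to_subtype, J, instJ, hJ, fun x => f ↑x,
      hf.comp (Subtype.mono_coe s), fun p hp => ?_⟩
    have hfibne : (f ⁻¹' {p}).Nonempty := by
      obtain ⟨y, hy⟩ := hp; exact ⟨↑y, hy⟩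
    set t : Set ↥(f ⁻¹' {p}) := {y | ↑y ∈ s} with ht
    have htc : t.OrdConnected := by
      constructor
      rintro y1 hy1 y2 hy2 z hz
      exact hc.out hy1 hy2 ⟨Subtype.coe_le_coe.mpr hz.1, Subtype.coe_le_coe.mpr hz.2⟩
    have htne : t.Nonempty := by
      obtain ⟨y, hy⟩ := hp; exact ⟨⟨↑y, hy⟩, y.2⟩
    have hrk := rk_subtype n t htc htne (hfib p hfibne)
    refine rk_congr n ?_ hrk
    exact (nestIso _ _).trans ((congrIso (fun x => by
      simp only [Set.mem_setOf_eq, Set.mem_preimage, Set.mem_singleton_iff]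
      exact and_comm)).trans (nestIso s (fun x => f x = p)).symm)

/-- Rk is preserved by gluing finitely many pieces along a monotone map. -/
theorem rk_glue (n : ℕ) {γ J : Type} [LinearOrder γ] [LinearOrder J] (hJ : Finite J)
    (hne : Nonempty γ) (f : γ → J) (hf : Monotone f)
    (hfib : ∀ j, (f ⁻¹' {j}).Nonempty → Rk n ↥(f ⁻¹' {j})) : Rk n γ := by
  cases n with
  | zero =>
    refine ⟨?_, hne⟩
    have hfin : ∀ j, Finite ↥(f ⁻¹' {j}) := by
      intro j
      by_cases h : (f ⁻¹' {j}).Nonempty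
      · exact (hfib j h).1
      · rw [Set.not_nonempty_iff_eq_empty] at h
        rw [h]; infer_instance
    exact Finite.of_equiv (Σ j : J, ↥(f ⁻¹' {j})) (Equiv.sigmaFiberEquiv f)
  | succ m =>
    have key : ∀ j : J, ∃ (K : Type) (_ : LinearOrder K), Finite K ∧
        ∃ g : ↥(f ⁻¹' {j}) → K ×ₗ ℤ, Monotone g ∧
          ∀ q, (g ⁻¹' {q}).Nonempty → Rk m ↥(g ⁻¹' {q}) := by
      intro j
      by_cases h : (f ⁻¹' {j}).Nonempty
      · obtain ⟨_, K, iK, finK, g, hg, hq⟩ := hfib j h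
        exact ⟨K, iK, finK, g, hg, hq⟩
      · have hE : IsEmpty ↥(f ⁻¹' {j}) := by
          rw [Set.not_nonempty_iff_eq_empty] at h
          rw [h]; infer_instance
        refine ⟨PUnit, inferInstance, inferInstance, fun x => hE.elim x, ?_, fun q hq => ?_⟩
        · intro a b _; exact hE.elim a
        · obtain ⟨y, _⟩ := hq; exact hE.elim y
    choose K iK finK g hg hfib2 using key
    set F : γ → (Lex (Σ j : J, K j)) ×ₗ ℤ := fun x =>
      toLex (⟨f x, (ofLex (g (f x) ⟨x, rfl⟩)).1⟩, (ofLex (g (f x) ⟨x, rfl⟩)).2) with hFdef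
    have Fspec : ∀ (j : J) (x : γ) (h : f x = j),
        F x = toLex (⟨j, (ofLex (g j ⟨x, h⟩)).1⟩, (ofLex (g j ⟨x, h⟩)).2) := by
      intro j x h; cases h; rfl
    have hFmono : Monotone F := by
      intro x y hxy
      rcases lt_or_eq_of_le (hf hxy) with h | h
      · rw [Fspec (f x) x rfl, Fspec (f y) y rfl]
        exact le_of_lt (Prod.Lex.lt_iff.mpr (Or.inl (Sigma.Lex.lt_def.mpr (Or.inl h))))
      · rw [Fspec (f x) x rfl, Fspec (f x) y h.symm]
        have hg' : g (f x) ⟨x, rfl⟩ ≤ g (f x) ⟨y, h.symm⟩ :=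
          hg (f x) (Subtype.mk_le_mk.mpr hxy)
        rcases Prod.Lex.le_iff.mp hg' with h2 | ⟨h2, h3⟩
        · exact le_of_lt (Prod.Lex.lt_iff.mpr (Or.inl
            (Sigma.Lex.lt_def.mpr (Or.inr ⟨rfl, h2⟩))))
        · refine Prod.Lex.le_iff.mpr (Or.inr ⟨?_, h3⟩)
          exact congrArg (Sigma.mk (f x)) h2
    have keyiff : ∀ (x : γ) (j : J) (a : K j) (mm : ℤ),
        F x = toLex (⟨j, a⟩, mm) ↔ ∃ h : f x = j, g j ⟨x, h⟩ = toLex (a, mm) := by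
      intro x j a mm
      constructor
      · intro hx
        have h1 : f x = j := by
          have := congrArg (fun w => (ofLex w).1.1) ((Fspec (f x) x rfl).symm.trans hx)
          exact this
        refine ⟨h1, ?_⟩
        rw [Fspec j x h1] at hx
        have h2 := congrArg ofLex hx
        have h3 : (⟨j, (ofLex (g j ⟨x, h1⟩)).1⟩ : Σ j', K j') = ⟨j, a⟩ :=
          congrArg Prod.fst h2
        have h4 : (ofLex (g j ⟨x, h1⟩)).1 = a := sigma_mk_injective h3
        have h5 : (ofLex (g j ⟨x, h1⟩)).2 = mm := congrArg Prod.snd h2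
        exact prodlex_eq _ _ _ h4 h5
      · rintro ⟨h, hgx⟩
        rw [Fspec j x h, hgx]; rfl
    have hfinL : Finite (Lex ((j : J) × K j)) := by
      haveI := finK
      exact Finite.of_equiv (Σ j : J, K j) toLex
    refine ⟨hne, Lex (Σ j : J, K j), inferInstance, hfinL, F, hFmono, ?_⟩
    rintro ⟨⟨j, a⟩, mm⟩ hp
    have hq : (g j ⁻¹' {toLex (a, mm)}).Nonempty := by
      obtain ⟨x, hx⟩ := hp
      obtain ⟨h, hgx⟩ := (keyiff x j a mm).mp hx
      exact ⟨⟨x, h⟩, hgx⟩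
    refine rk_congr m ?_ (hfib2 j (toLex (a, mm)) hq)
    refine (congrIso (s := g j ⁻¹' {toLex (a, mm)})
        (t := {u : ↥(f ⁻¹' {j}) | ∃ h : f ↑u = j, g j ⟨↑u, h⟩ = toLex (a, mm)}) ?_).trans
      (((nestIso (f ⁻¹' {j}) (fun x => ∃ h : f x = j, g j ⟨x, h⟩ = toLex (a, mm)))).trans (congrIso ?_))
    · intro u
      exact ⟨fun hu => ⟨u.2, hu⟩, fun ⟨h, hgu⟩ => hgu⟩
    · intro x
      constructor
      · rintro ⟨hx, h, hgx⟩
        exact (keyiff x j a mm).mpr ⟨h, hgx⟩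
      · intro hx
        obtain ⟨h, hgx⟩ := (keyiff x j a mm).mp hx
        exact ⟨h, h, hgx⟩


theorem memI_of_rk : ∀ (n : ℕ) {γ : Type} [LinearOrder γ], Rk n γ → MemI n γ
  | 0, γ, _, h => h
  | n + 1, γ, _, ⟨hne, J, instJ, hJ, f, hf, hfib⟩ => by
    haveI := hJ
    set f1 : γ → J := fun x => (ofLex (f x)).1 with hf1def
    have hf1 : Monotone f1 := fun x y hxy => prodlex_fst_mono (hf hxy)
    set A : Set J := Set.range f1 with hA
    haveI : Fintype ↥A := Fintype.ofFinite _
    have hAne : Nonempty ↥A := ⟨⟨f1 hne.some, Set.mem_range_self _⟩⟩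
    set k : ℕ := Fintype.card ↥A with hkdef
    have hk : 0 < k := Fintype.card_pos
    set e : Fin k ≃o ↥A := monoEquivOfFin ↥A rfl with hedef
    refine ⟨k, hk, fun r => ↥(f1 ⁻¹' {(e r : J)}), fun r => inferInstance, fun r => ?_, ?_⟩
    · -- IsZSum
      set j : J := (e r : J) with hjdef
      set g : ↥(f1 ⁻¹' {j}) → ℤ := fun u => (ofLex (f ↑u)).2 with hgdef
      have hgmono : Monotone g := by
        intro u v huv
        exact prodlex_snd_mono (hf (Subtype.coe_le_coe.mpr huv)) (u.2.trans v.2.symm)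
      refine ⟨fun m => ↥(f ⁻¹' {toLex (j, m)}), fun m => inferInstance, fun m => ?_, ?_, ?_⟩
      · by_cases h : (f ⁻¹' {toLex (j, m)}).Nonempty
        · exact Or.inr (memI_of_rk n (hfib _ h))
        · rw [Set.not_nonempty_iff_eq_empty] at h
          exact Or.inl (Set.isEmpty_coe_sort.mpr h)
      · obtain ⟨x, hx⟩ : ∃ x, f1 x = j := (e r).2
        refine ⟨(ofLex (f x)).2, ⟨⟨x, ?_⟩⟩⟩
        exact prodlex_eq _ _ _ hx rfl
      · refine ⟨(fiberIso g hgmono).trans (sigmaLexCongr fun m => ?_)⟩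
        refine ((nestIso (f1 ⁻¹' {j}) (fun x => (ofLex (f x)).2 = m)).trans
          (congrIso fun x => ?_))
        constructor
        · rintro ⟨hx1, hx2⟩
          exact prodlex_eq _ _ _ hx1 hx2
        · intro hx
          have hx' : f x = toLex (j, m) := hx
          constructor
          · show (ofLex (f x)).1 = j
            rw [hx', ofLex_toLex]
          · show (ofLex (f x)).2 = m
            rw [hx', ofLex_toLex]
    · -- the global iso
      have hmem : ∀ x : γ, f1 x ∈ A := fun x => Set.mem_range_self x
      set h0 : γ → Fin k := fun x => e.symm ⟨f1 x, hmem x⟩ with hh0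
      have hh0mono : Monotone h0 :=
        fun x y hxy => e.symm.monotone (Subtype.mk_le_mk.mpr (hf1 hxy))
      refine ⟨(fiberIso h0 hh0mono).trans (sigmaLexCongr fun r => congrIso fun x => ?_)⟩
      show h0 x = r ↔ f1 x = (e r : J)
      rw [hh0, OrderIso.symm_apply_eq]
      exact Subtype.ext_iff

theorem rk_of_memI : ∀ (n : ℕ) {γ : Type} [LinearOrder γ], MemI n γ → Rk n γ
  | 0, _, _, h => h
  | n + 1, γ, _, ⟨k, hk, δ, instδ, hδ, ⟨e⟩⟩ => by
    have hδ' : ∀ j : Fin k, ∃ (β : ℤ → Type) (_ : ∀ m, LinearOrder (β m)),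
        (∀ m, IsEmpty (β m) ∨ MemI n (β m)) ∧ (∃ m, Nonempty (β m)) ∧
        Nonempty (δ j ≃o Lex (Σ m, β m)) := hδ
    choose β instβ hor hne2 hiso using hδ'
    have ej : ∀ j, δ j ≃o Lex (Σ m, β j m) := fun j => (hiso j).some
    set F' : Lex (Σ j, δ j) → Fin k ×ₗ ℤ := fun u => toLex (u.1, ((ej u.1) u.2).1) with hF'
    have hneγ : Nonempty γ := by
      obtain ⟨m, ⟨b⟩⟩ := hne2 ⟨0, hk⟩
      exact ⟨e.symm ⟨⟨0, hk⟩, (ej ⟨0, hk⟩).symm ⟨m, b⟩⟩⟩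
    have hF'mono : ∀ u v : Lex (Σ j, δ j), u ≤ v → F' u ≤ F' v := by
      rintro ⟨j, a⟩ ⟨j', b⟩ h
      rcases lt_or_eq_of_le (sigma_fst_mono h) with h1 | h1
      · exact le_of_lt (Prod.Lex.lt_iff.mpr (Or.inl h1))
      · have h1' : j = j' := h1
        subst h1'
        have h3 : a ≤ b := sigma_snd_le h
        have h4 := sigma_fst_mono ((ej j).monotone h3)
        exact Prod.Lex.le_iff.mpr (Or.inr ⟨rfl, h4⟩)
    refine ⟨hneγ, Fin k, inferInstance, inferInstance, fun x => F' (e x),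
      fun x y hxy => hF'mono _ _ (e.monotone hxy), ?_⟩
    rintro ⟨j, mm⟩ hp
    have keyiff : ∀ u : Lex (Σ j', δ j'), F' u = toLex (j, mm) ↔
        u.1 = j ∧ ((ej u.1) u.2).1 = mm := by
      intro u
      constructor
      · intro hu
        exact ⟨congrArg (fun w => (ofLex w).1) hu, congrArg (fun w => (ofLex w).2) hu⟩
      · rintro ⟨h1, h2⟩
        rw [hF']
        exact prodlex_eq _ _ _ h1 h2
    have chain : ↥((fun x => F' (e x)) ⁻¹' {toLex (j, mm)}) ≃o β j mm := by
      refine ((preimageIso e {u | F' u = toLex (j, mm)}).trans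
        ((congrIso fun u => keyiff u).trans
        (((fstFiberIsoP δ (fun j' b => ((ej j') b).1 = mm) j).symm.trans
        (preimageIso (ej j) {w | w.1 = mm})).trans (fstFiberIso (β j) mm).symm)))
    have hbne : Nonempty (β j mm) := Nonempty.map chain hp.to_subtype
    rcases hor j mm with h | h
    · exact absurd hbne (not_nonempty_iff.mpr h)
    · exact rk_congr n chain.symm (rk_of_memI n h)


/-- one-summand sum -/
def oneSum (γ : Type) [LinearOrder γ] : γ ≃o Lex (Σ _ : Fin 1, γ) where
  toFun x := ⟨0, x⟩
  invFun p := p.2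
  left_inv x := rfl
  right_inv := by
    rintro ⟨j, x⟩
    have : j = 0 := Subsingleton.elim _ _
    subst this; rfl
  map_rel_iff' := by
    intro a b
    constructor
    · intro h; exact sigma_snd_le h
    · intro h; exact Sigma.Lex.le_def.mpr (Or.inr ⟨rfl, h⟩)

theorem positive_part (k : ℕ) (β : ℕ → Type) [∀ i, LinearOrder (β i)]
    (h1 : ∀ i, IsEmpty (β i) ∨ MemI k (β i))
    (h2 : {i : ℕ | Nonempty (β i) ∧ ¬ MemI (k - 1) (β i)}.Infinite) :
    MemI (k + 1) (Lex (Σ i, β i)) := by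
  set γt := Lex (Σ i, β i) with hγt
  refine ⟨1, one_pos, fun _ => γt, fun _ => inferInstance, fun _ => ?_, ⟨oneSum γt⟩⟩
  set fst' : γt → ℤ := fun x => ((x.1 : ℕ) : ℤ) with hfst'
  have hmono : Monotone fst' := by
    intro x y hxy
    show ((x.1 : ℕ) : ℤ) ≤ ((y.1 : ℕ) : ℤ)
    exact_mod_cast sigma_fst_mono hxy
  refine ⟨fun mm => {x : γt // fst' x = mm}, fun mm => inferInstance, fun mm => ?_, ?_, ?_⟩
  · by_cases h : ∃ x : γt, fst' x = mm
    · obtain ⟨x, hx⟩ := h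
      set i := x.1 with hi
      have iso1 : ({y : γt // Sigma.fst y = i}) ≃o {y : γt // fst' y = mm} :=
        congrIso (fun y => by
          have hx' : ((i : ℕ) : ℤ) = mm := hx
          constructor
          · intro hy
            have hy' : Sigma.fst y = i := hy
            show ((y.1 : ℕ) : ℤ) = mm
            rw [hy']; exact hx'
          · intro hy
            have hy' : ((y.1 : ℕ) : ℤ) = mm := hy
            show Sigma.fst y = i
            have hcast : ((y.1 : ℕ) : ℤ) = ((i : ℕ) : ℤ) := by rw [hy', hx']
            exact_mod_cast hcast)
      rcases h1 i with hE | hM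
      · refine Or.inl ?_
        refine ⟨fun u => ?_⟩
        have := iso1.symm u
        exact hE.elim ((fstFiberIso β i).symm this)
      · exact Or.inr (memI_congr ((fstFiberIso β i).trans iso1) hM)
    · refine Or.inl ⟨fun u => h ⟨u.1, u.2⟩⟩
  · obtain ⟨i, ⟨⟨b⟩, _⟩⟩ := h2.nonempty
    exact ⟨((i : ℕ) : ℤ), ⟨⟨toLex ⟨i, b⟩, rfl⟩⟩⟩
  · exact ⟨fiberIso fst' hmono⟩


theorem negative_part (m : ℕ) (β : ℕ → Type) [∀ i, LinearOrder (β i)]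
    (h2 : {i : ℕ | Nonempty (β i) ∧ ¬ MemI m (β i)}.Infinite) :
    ¬ MemI (m + 1) (Lex (Σ i, β i)) := by
  intro hMem
  set γt := Lex (Σ i, β i) with hγt
  obtain ⟨hneγ, J, instJ, hJ, F, hF, hfib⟩ := rk_of_memI (m + 1) hMem
  haveI := hJ
  set S := {i : ℕ | Nonempty (β i) ∧ ¬ MemI m (β i)} with hS
  classical
  set φ : ℕ → J := fun i => if h : Nonempty (β i) then (ofLex (F (toLex ⟨i, h.some⟩))).1
      else (ofLex (F hneγ.some)).1 with hφ
  obtain ⟨j₀, hT⟩ : ∃ j₀, {i | i ∈ S ∧ φ i = j₀}.Infinite := by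
    by_contra hcon
    push_neg at hcon
    apply h2
    have hsub : S ⊆ ⋃ j ∈ (Set.univ : Set J), {i | i ∈ S ∧ φ i = j} := by
      intro i hi
      exact Set.mem_biUnion (Set.mem_univ (φ i)) ⟨hi, rfl⟩
    exact Set.Finite.subset (Set.Finite.biUnion Set.finite_univ
      (fun j _ => hcon j)) hsub
  obtain ⟨i₀, hi₀⟩ := hT.nonempty
  obtain ⟨i₁, hi₁T, h01⟩ := hT.exists_gt i₀
  obtain ⟨i₂, hi₂T, h12⟩ := hT.exists_gt i₁
  have hb0 : Nonempty (β i₀) := hi₀.1.1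
  have hb1 : Nonempty (β i₁) := hi₁T.1.1
  have hb2 : Nonempty (β i₂) := hi₂T.1.1
  set x₀ : γt := toLex ⟨i₀, hb0.some⟩ with hx₀
  set x₂ : γt := toLex ⟨i₂, hb2.some⟩ with hx₂
  have hj0 : (ofLex (F x₀)).1 = j₀ := by
    have h := hi₀.2
    simp only [hφ] at h
    rwa [dif_pos hb0] at h
  have hj2 : (ofLex (F x₂)).1 = j₀ := by
    have h := hi₂T.2
    simp only [hφ] at h
    rwa [dif_pos hb2] at h
  set m₀ : ℤ := (ofLex (F x₀)).2 with hm₀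
  set m₂ : ℤ := (ofLex (F x₂)).2 with hm₂
  set s : Set γt := {y | Sigma.fst y = i₁} with hsdef
  have hbound : ∀ y : γt, y ∈ s →
      (ofLex (F y)).1 = j₀ ∧ m₀ ≤ (ofLex (F y)).2 ∧ (ofLex (F y)).2 ≤ m₂ := by
    intro y hy
    have hy' : Sigma.fst y = i₁ := hy
    have hlt0 : x₀ < y := Sigma.Lex.lt_def.mpr (Or.inl (by rw [hy']; exact h01))
    have hlt2 : y < x₂ := Sigma.Lex.lt_def.mpr (Or.inl (by rw [hy']; exact h12))
    have hle0 := hF hlt0.le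
    have hle2 := hF hlt2.le
    have hf1 : (ofLex (F y)).1 = j₀ :=
      le_antisymm (hj2 ▸ prodlex_fst_mono hle2) (hj0 ▸ prodlex_fst_mono hle0)
    exact ⟨hf1, prodlex_snd_mono hle0 (hj0.trans hf1.symm),
      prodlex_snd_mono hle2 (hf1.trans hj2.symm)⟩
  have hsc : s.OrdConnected := by
    constructor
    rintro y1 hy1 y2 hy2 z ⟨hz1, hz2⟩
    have hy1' : Sigma.fst y1 = i₁ := hy1
    have hy2' : Sigma.fst y2 = i₁ := hy2
    exact le_antisymm (hy2' ▸ sigma_fst_mono hz2) (hy1' ▸ sigma_fst_mono hz1)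
  have hsne : s.Nonempty := ⟨toLex ⟨i₁, hb1.some⟩, rfl⟩
  haveI hIccFin : Finite ↥(Set.Icc m₀ m₂) := (Set.finite_Icc m₀ m₂).to_subtype
  set g : ↥s → ↥(Set.Icc m₀ m₂) := fun y => ⟨(ofLex (F ↑y)).2, (hbound ↑y y.2).2⟩ with hgdef
  have hgmono : Monotone g := by
    intro y y' hyy
    have h := hF (Subtype.coe_le_coe.mpr hyy)
    exact Subtype.mk_le_mk.mpr (prodlex_snd_mono h
      (((hbound _ y.2).1).trans ((hbound _ y'.2).1).symm))
  have hfibg : ∀ q, (g ⁻¹' {q}).Nonempty → Rk m ↥(g ⁻¹' {q}) := by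
    intro q hq
    set p : J ×ₗ ℤ := toLex (j₀, (q : ℤ)) with hpdef
    have hiff : ∀ y : ↥s, g y = q ↔ F ↑y = p := by
      intro y
      constructor
      · intro h
        have h2' : (ofLex (F ↑y)).2 = (q : ℤ) := congrArg Subtype.val h
        exact prodlex_eq _ _ _ (hbound ↑y y.2).1 h2'
      · intro h
        apply Subtype.ext
        show (ofLex (F ↑y)).2 = (q : ℤ)
        rw [h, ofLex_toLex]
    have hpne : (F ⁻¹' {p}).Nonempty := by
      obtain ⟨y, hy⟩ := hq
      exact ⟨↑y, (hiff y).mp hy⟩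
    have hFf := hfib p hpne
    set t : Set ↥(F ⁻¹' {p}) := {z | (z : γt) ∈ s} with htdef
    have htc : t.OrdConnected := by
      constructor
      rintro z1 hz1 z2 hz2 w ⟨hw1, hw2⟩
      exact hsc.out hz1 hz2 ⟨Subtype.coe_le_coe.mpr hw1, Subtype.coe_le_coe.mpr hw2⟩
    have htne : t.Nonempty := by
      obtain ⟨y, hy⟩ := hq
      exact ⟨⟨↑y, (hiff y).mp hy⟩, y.2⟩
    refine rk_congr m ?_ (rk_subtype m t htc htne hFf)
    refine (nestIso (F ⁻¹' {p}) (fun x => x ∈ s)).trans ((congrIso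
        (s := {x : γt | x ∈ F ⁻¹' {p} ∧ x ∈ s}) (t := {x : γt | x ∈ s ∧ F x = p})
        (fun x => ⟨fun h => ⟨h.2, h.1⟩, fun h => ⟨h.2, h.1⟩⟩)).trans
      ((nestIso s (fun x => F x = p)).symm.trans
        (congrIso (s := {y : ↥s | F ↑y = p}) (t := g ⁻¹' {q}) (fun y => (hiff y).symm))))
  have hrkS : Rk m ↥s := rk_glue m hIccFin hsne.to_subtype g hgmono hfibg
  have hmm : MemI m (β i₁) := memI_of_rk m (rk_congr m (fstFiberIso β i₁).symm hrkS)
  exact hi₁T.1.2 hmm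

end OSR

/-- An ω-sum of blocks, each empty or in `I_k`, with infinitely many nonempty blocks not
in `I_{k-1}`, has infinitary rank exactly `k + 1`: it is in `I_{k+1}` but not in `I_k`. -/
theorem omega_sum_rank (k : ℕ) (hk : 1 ≤ k) (β : ℕ → Type) [∀ i, LinearOrder (β i)]
    (h1 : ∀ i, IsEmpty (β i) ∨ MemI k (β i))
    (h2 : {i : ℕ | Nonempty (β i) ∧ ¬ MemI (k - 1) (β i)}.Infinite) :
    MemI (k + 1) (Lex (Σ i, β i)) ∧ ¬ MemI k (Lex (Σ i, β i)) := by
  refine ⟨OSR.positive_part k β h1 h2, ?_⟩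
  obtain ⟨m, rfl⟩ : ∃ m, k = m + 1 := ⟨k - 1, (Nat.succ_pred_eq_of_pos hk).symm⟩
  rw [Nat.add_sub_cancel] at h2
  exact OSR.negative_part m β h2
end

section
/- The order ω has infinitary rank 1 and the order ω² has infinitary rank 2: the linear order ℕ belongs to I₁ but not to I₀, and the lexicographic product ℕ ×ₗ ℕ (order type ω²) belongs to I₂ but not to I₁. -/
open Set

/-- `MemI` is closed under order isomorphism. -/
lemma memI_iso {n : ℕ} {γ γ' : Type} [LinearOrder γ] [LinearOrder γ'] (e : γ ≃o γ')
    (h : MemI n γ) : MemI n γ' := by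
  cases n with
  | zero =>
    obtain ⟨h1, h2⟩ := h
    exact ⟨Finite.of_equiv γ e.toEquiv, h2.map e⟩
  | succ n =>
    obtain ⟨k, hk, δ, inst, hδ, ⟨f⟩⟩ := h
    exact ⟨k, hk, δ, inst, hδ, ⟨e.symm.trans f⟩⟩

/-- The subtype of naturals equal to a given integer. -/
abbrev NatAt (i : ℤ) : Type := {n : ℕ // (n : ℤ) = i}

instance (i : ℤ) : Subsingleton (NatAt i) :=
  ⟨fun x y => Subtype.ext (show (x : ℕ) = (y : ℕ) by have h1 := x.2; have h2 := y.2; omega)⟩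

lemma natAt_empty_or_mem0 (i : ℤ) : IsEmpty (NatAt i) ∨ MemI 0 (NatAt i) := by
  rcases le_or_gt 0 i with h | h
  · exact Or.inr ⟨Finite.of_subsingleton, ⟨⟨i.toNat, by omega⟩⟩⟩
  · exact Or.inl ⟨fun ⟨n, hn⟩ => by omega⟩

/-- `ℕ` is a Z-sum of finite pieces. -/
lemma isZSum_nat : IsZSum (MemI 0) ℕ := by
  refine ⟨NatAt, fun i => inferInstance, natAt_empty_or_mem0, ⟨0, ⟨⟨0, rfl⟩⟩⟩, ?_⟩
  have hsm : StrictMono (fun n : ℕ => toLex (⟨(n : ℤ), ⟨n, rfl⟩⟩ : Σ i, NatAt i)) := by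
    intro m n h
    exact Sigma.Lex.lt_def.2 (Or.inl (show ((m : ℕ) : ℤ) < ((n : ℕ) : ℤ) by exact_mod_cast h))
  have hsurj : Function.Surjective
      (fun n : ℕ => toLex (⟨(n : ℤ), ⟨n, rfl⟩⟩ : Σ i, NatAt i)) := by
    rintro ⟨i, n, hn⟩
    subst hn
    exact ⟨n, rfl⟩
  exact ⟨StrictMono.orderIsoOfSurjective _ hsm hsurj⟩

/-- Realize a linear order as the lex sum over `Fin 1`. -/
lemma sigma_fin_one_iso (δ : Fin 1 → Type) [∀ j, LinearOrder (δ j)] :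
    Nonempty (δ 0 ≃o Lex (Σ j, δ j)) := by
  have hsm : StrictMono (fun x : δ 0 => toLex (⟨0, x⟩ : Σ j, δ j)) := by
    intro x y h
    exact Sigma.Lex.lt_def.2 (Or.inr ⟨rfl, h⟩)
  have hsurj : Function.Surjective (fun x : δ 0 => toLex (⟨0, x⟩ : Σ j, δ j)) := by
    rintro ⟨j, x⟩
    have hj : j = 0 := Subsingleton.elim _ _
    subst hj
    exact ⟨x, rfl⟩
  exact ⟨StrictMono.orderIsoOfSurjective _ hsm hsurj⟩

lemma memI_one_nat : MemI 1 ℕ :=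
  ⟨1, one_pos, fun _ => ℕ, fun _ => inferInstance, fun _ => isZSum_nat,
    sigma_fin_one_iso (fun _ => ℕ)⟩

/-- `ω²` is a Z-sum of copies of `ω`. -/
lemma isZSum_nat_lex_nat : IsZSum (MemI 1) (ℕ ×ₗ ℕ) := by
  refine ⟨fun i => Lex (NatAt i × ℕ), fun i => inferInstance, ?_, ?_, ?_⟩
  · intro i
    rcases le_or_gt 0 i with h | h
    · refine Or.inr (memI_iso ?_ memI_one_nat)
      have hx : NatAt i := ⟨i.toNat, by omega⟩
      have hsm : StrictMono (fun m : ℕ => toLex ((hx, m) : NatAt i × ℕ)) := by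
        intro m m' hm
        exact Prod.Lex.lt_iff.2 (Or.inr ⟨rfl, hm⟩)
      have hsurj : Function.Surjective (fun m : ℕ => toLex ((hx, m) : NatAt i × ℕ)) := by
        rintro ⟨x, m⟩
        exact ⟨m, by rw [Subsingleton.elim hx x]; rfl⟩
      exact StrictMono.orderIsoOfSurjective _ hsm hsurj
    · exact Or.inl ⟨fun p => absurd ((ofLex p).1.2) (by omega)⟩
  · exact ⟨0, ⟨toLex (⟨0, rfl⟩, 0)⟩⟩
  · have hsm : StrictMono (fun p : ℕ ×ₗ ℕ =>
        toLex (⟨((ofLex p).1 : ℤ), toLex ((⟨(ofLex p).1, rfl⟩, (ofLex p).2)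
          : NatAt ((ofLex p).1 : ℤ) × ℕ)⟩ : Σ i, Lex (NatAt i × ℕ))) := by
      rintro ⟨a, b⟩ ⟨a', b'⟩ h
      rcases (Prod.Lex.lt_iff (x := (a, b)) (y := (a', b'))).1 h with h1 | ⟨h1, h2⟩
      · exact Sigma.Lex.lt_def.2
          (Or.inl (show ((a : ℕ) : ℤ) < ((a' : ℕ) : ℤ) by exact_mod_cast h1))
      · dsimp at h1 h2 ⊢
        subst h1
        exact Sigma.Lex.lt_def.2 (Or.inr ⟨rfl, Prod.Lex.lt_iff.2 (Or.inr ⟨rfl, h2⟩)⟩)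
    have hsurj : Function.Surjective (fun p : ℕ ×ₗ ℕ =>
        toLex (⟨((ofLex p).1 : ℤ), toLex ((⟨(ofLex p).1, rfl⟩, (ofLex p).2)
          : NatAt ((ofLex p).1 : ℤ) × ℕ)⟩ : Σ i, Lex (NatAt i × ℕ))) := by
      rintro ⟨i, ⟨n, hn⟩, b⟩
      subst hn
      exact ⟨toLex (n, b), rfl⟩
    exact ⟨StrictMono.orderIsoOfSurjective _ hsm hsurj⟩

lemma memI_two : MemI 2 (ℕ ×ₗ ℕ) :=
  ⟨1, one_pos, fun _ => ℕ ×ₗ ℕ, fun _ => inferInstance, fun _ => isZSum_nat_lex_nat,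
    sigma_fin_one_iso (fun _ => ℕ ×ₗ ℕ)⟩

/-- In a Z-sum of finite pieces, every closed interval is finite. -/
lemma IsZSum.finite_Icc {γ : Type} [LinearOrder γ] (h : IsZSum (MemI 0) γ) (a b : γ) :
    (Set.Icc a b).Finite := by
  obtain ⟨β, inst, hβ, -, ⟨e⟩⟩ := h
  have hfin : ∀ i, Finite (β i) := by
    intro i
    rcases hβ i with h | ⟨h, -⟩
    · exact Finite.of_subsingleton
    · exact h
  have key : ∀ p q : Lex (Σ i, β i), (Set.Icc p q).Finite := by
    intro p q
    have hsub : Set.Icc p q ⊆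
        ⋃ m ∈ Set.Icc p.1 q.1, Set.range (fun x : β m => toLex (⟨m, x⟩ : Σ i, β i)) := by
      rintro z ⟨h1, h2⟩
      have hz1 : p.1 ≤ z.1 := by
        rcases Sigma.Lex.le_def.1 h1 with h | ⟨h, -⟩
        · exact h.le
        · exact h.le
      have hz2 : z.1 ≤ q.1 := by
        rcases Sigma.Lex.le_def.1 h2 with h | ⟨h, -⟩
        · exact h.le
        · exact h.le
      exact Set.mem_biUnion ⟨hz1, hz2⟩ ⟨z.2, rfl⟩
    exact Set.Finite.subset
      ((Set.finite_Icc p.1 q.1).biUnion (fun m _ => Set.finite_range _)) hsub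
  have : Set.Icc a b = e ⁻¹' Set.Icc (e a) (e b) := by
    ext x; simp
  rw [this]
  exact (key (e a) (e b)).preimage e.injective.injOn

/-- In a lex sum over `Fin k` of orders with finite intervals, intervals with endpoints in
the same summand are finite. -/
lemma finite_Icc_same_fst {k : ℕ} {δ : Fin k → Type} [∀ j, LinearOrder (δ j)]
    (hIcc : ∀ j (a b : δ j), (Set.Icc a b).Finite)
    (q q' : Lex (Σ j, δ j)) (hj : q.1 = q'.1) : (Set.Icc q q').Finite := by
  obtain ⟨j, a⟩ := q
  obtain ⟨j', b⟩ := q'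
  dsimp at hj
  subst hj
  refine ((hIcc j a b).image (fun c => toLex (⟨j, c⟩ : Σ j, δ j))).subset ?_
  rintro ⟨j1, c⟩ ⟨h1, h2⟩
  rcases Sigma.Lex.le_def.1 h1 with hlt | ⟨h1', hle⟩
  · rcases Sigma.Lex.le_def.1 h2 with hlt' | ⟨h', -⟩
    · exact absurd (hlt.trans hlt') (lt_irrefl _)
    · exact absurd (h' ▸ hlt) (lt_irrefl _)
  · rcases Sigma.Lex.le_def.1 h2 with hlt' | ⟨h', hle'⟩
    · have h'' : j = j1 := h1'
      subst h''
      exact absurd hlt' (lt_irrefl _)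
    · have h'' : j = j1 := h1'
      subst h''
      exact ⟨c, ⟨hle, hle'⟩, rfl⟩

lemma not_memI_one : ¬ MemI 1 (ℕ ×ₗ ℕ) := by
  rintro ⟨k, hk, δ, inst, hδ, ⟨e⟩⟩
  have hIcc : ∀ j (a b : δ j), (Set.Icc a b).Finite := fun j => (hδ j).finite_Icc
  set P : Fin (k + 1) → ℕ ×ₗ ℕ := fun i => toLex ((i : ℕ), 0) with hP
  set f : Fin (k + 1) → Fin k := fun i => (e (P i)).1 with hf
  have key : ∀ i i' : Fin (k + 1), i < i' → f i = f i' → False := by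
    intro i i' hii hfi
    -- the interval [P i, P i'] is infinite
    have hmem : ∀ n : ℕ, toLex (((i : ℕ), n) : ℕ × ℕ) ∈ Set.Icc (P i) (P i') := by
      intro n
      constructor
      · exact Prod.Lex.le_iff.2 (Or.inr ⟨rfl, Nat.zero_le n⟩)
      · exact Prod.Lex.le_iff.2 (Or.inl (by exact_mod_cast hii))
    have hinj : Function.Injective (fun n : ℕ => toLex (((i : ℕ), n) : ℕ × ℕ)) := by
      intro m n h
      simpa using congrArg (fun p : ℕ ×ₗ ℕ => (ofLex p).2) h
    have hinf : (Set.Icc (P i) (P i')).Infinite :=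
      Set.infinite_of_injective_forall_mem hinj hmem
    have himg : (Set.Icc (e (P i)) (e (P i'))).Infinite := by
      rw [← e.image_Icc]
      exact hinf.image e.injective.injOn
    exact himg (finite_Icc_same_fst hIcc _ _ hfi)
  obtain ⟨i, i', hne, hfi⟩ := Fintype.exists_ne_map_eq_of_card_lt f (by simp)
  rcases hne.lt_or_gt with h | h
  · exact key i i' h hfi
  · exact key i' i h hfi.symm

/-- `ω` (the order `ℕ`) has infinitary rank `1`, and `ω²` (the lexicographic product
`ℕ ×ₗ ℕ`) has infinitary rank `2`. -/
theorem omega_rank_one_omega_sq_rank_two :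
    (MemI 1 ℕ ∧ ¬ MemI 0 ℕ) ∧ (MemI 2 (ℕ ×ₗ ℕ) ∧ ¬ MemI 1 (ℕ ×ₗ ℕ)) := by
  refine ⟨⟨memI_one_nat, ?_⟩, memI_two, not_memI_one⟩
  rintro ⟨h, -⟩
  exact @not_finite ℕ _ h
end
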